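/- arXiv:1610.03331 — 6 statements merged into one kernel-verified Lean document; each statement's English description precedes it below -/
import Mathlib

section
/- Let B be a comeager subset of X = (2^ω)^ω (with the product topology). Then there exists a sequence ⟨C_n : n ∈ ω⟩ of perfect subsets of 2^ω such that the product ∏_{n∈ω} C_n is contained in B. -/
open Set

namespace PolMyc

/-- The space `(2^ω)^ω`. -/
abbrev XX := ℕ → ℕ → Bool

/-- A finite approximation to an element of `2^ω`: a length and a function
(whose values beyond the length are irrelevant). -/
abbrev Approx := ℕ × (ℕ → Bool)

/-- `x` agrees with the approximation `a` on its domain. -/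
def Agr (a : Approx) (x : ℕ → Bool) : Prop := ∀ j < a.1, x j = a.2 j

/-- `b` extends `a` as approximations. -/
def AExt (a b : Approx) : Prop := a.1 ≤ b.1 ∧ ∀ j < a.1, b.2 j = a.2 j

lemma AExt.rfl (a : Approx) : AExt a a := ⟨le_rfl, fun _ _ => _root_.rfl⟩

lemma AExt.trans {a b c : Approx} (h1 : AExt a b) (h2 : AExt b c) : AExt a c :=
  ⟨h1.1.trans h2.1, fun j hj => (h2.2 j (lt_of_lt_of_le hj h1.1)).trans (h1.2 j hj)⟩

lemma Agr.mono {a b : Approx} {x : ℕ → Bool} (h : AExt a b) (hb : Agr b x) : Agr a x :=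
  fun j hj => (hb j (lt_of_lt_of_le hj h.1)).trans (h.2 j hj)

/-- A "state": for each coordinate `n` and each node (coded by a branch) an approximation. -/
abbrev St := ℕ → (ℕ → Bool) → Approx

/-- Open sets in `XX` contain symmetric cylinders. -/
lemma cyl {D : Set XX} (hD : IsOpen D) {y : XX} (hy : y ∈ D) :
    ∃ M, ∀ x : XX, (∀ n ≤ M, ∀ j ≤ M, x n j = y n j) → x ∈ D := by
  obtain ⟨I, u, hu, hsub⟩ := isOpen_pi_iff.mp hD y hy
  choose J v hv hsub2 using fun i (hi : i ∈ I) => isOpen_pi_iff.mp (hu i hi).1 (y i) (hu i hi).2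
  refine ⟨I.sup id ⊔ I.attach.sup (fun i => (J i.1 i.2).sup id), fun x hx => ?_⟩
  apply hsub
  intro i hi
  apply hsub2 i hi
  intro j hj
  have hiM : i ≤ I.sup id ⊔ I.attach.sup (fun i => (J i.1 i.2).sup id) :=
    le_trans (Finset.le_sup (f := id) hi) le_sup_left
  have hjM : j ≤ I.sup id ⊔ I.attach.sup (fun i => (J i.1 i.2).sup id) := by
    refine le_trans ?_ le_sup_right
    exact le_trans (Finset.le_sup (f := id) hj)
      (Finset.le_sup (f := fun i => (J i.1 i.2).sup id) (Finset.mem_attach I ⟨i, hi⟩))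
  rw [hx i hiM j hjM]
  exact (hv i hi j hj).2

/-- One density step: extend a finite family of approximations so that the
resulting cylinder is contained in the dense open set `D`. -/
lemma shrink (D : Set XX) (hDo : IsOpen D) (hDd : Dense D) (p : ℕ → Approx) (K : ℕ)
    (hp : ∀ n, K ≤ n → (p n).1 = 0) :
    ∃ (q : ℕ → Approx) (K' : ℕ), K ≤ K' ∧ (∀ n, K' ≤ n → (q n).1 = 0) ∧
      (∀ n, AExt (p n) (q n)) ∧ (∀ x : XX, (∀ n, Agr (q n) (x n)) → x ∈ D) := by
  set U : Set XX := {x | ∀ n, Agr (p n) (x n)} with hU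
  have hUo : IsOpen U := by
    have hUeq : U = ⋂ n ∈ Finset.range K, ⋂ j ∈ Finset.range (p n).1,
        {x : XX | x n j = (p n).2 j} := by
      ext x
      simp only [hU, mem_iInter, Finset.mem_range, mem_setOf_eq, Agr]
      constructor
      · intro h n _ j hj; exact h n j hj
      · intro h n j hj
        rcases lt_or_ge n K with hn | hn
        · exact h n hn j hj
        · exact absurd hj (by simp [hp n hn])
    rw [hUeq]
    refine isOpen_biInter_finset fun n _ => isOpen_biInter_finset fun j _ => ?_
    have hpre : {x : XX | x n j = (p n).2 j} = (fun x : XX => x n j) ⁻¹' {(p n).2 j} := rfl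
    rw [hpre]
    exact (isOpen_discrete _).preimage ((continuous_apply j).comp (continuous_apply n))
  have hUne : U.Nonempty := ⟨fun n => (p n).2, fun n j _ => rfl⟩
  obtain ⟨y, hyU, hyD⟩ := hDd.inter_open_nonempty U hUo hUne
  obtain ⟨M, hM⟩ := cyl hDo hyD
  refine ⟨fun n => if n < max K (M+1) then (max (M+1) (p n).1, y n) else p n,
    max K (M+1), le_max_left _ _, ?_, ?_, ?_⟩
  · intro n hn
    simp only [if_neg (not_lt.mpr hn)]
    exact hp n (le_trans (le_max_left _ _) hn)
  · intro n
    by_cases h : n < max K (M+1)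
    · simp only [if_pos h]
      exact ⟨le_max_right _ _, fun j hj => hyU n j hj⟩
    · simp only [if_neg h]; exact AExt.rfl _
  · intro x hx
    apply hM
    intro n hn j hj
    have h1 : n < max K (M+1) := lt_of_le_of_lt hn (lt_of_lt_of_le (Nat.lt_succ_self M) (le_max_right _ _))
    have h2 := hx n
    simp only [if_pos h1] at h2
    exact h2 j (lt_of_le_of_lt hj (lt_of_lt_of_le (Nat.lt_succ_self M) (le_max_left _ _)))

/-- Embed a finitary choice into a full choice function. -/
def cext (k : ℕ) (c : Fin (k+1) → Fin (k+1) → Bool) : ℕ → ℕ → Bool :=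
  fun n i => if h : n < k+1 ∧ i < k+1 then c ⟨n, h.1⟩ ⟨i, h.2⟩ else false

/-- The inner finite recursion over a list of choices. -/
lemma inner (D : Set XX) (hDo : IsOpen D) (hDd : Dense D) (k : ℕ)
    (cs : List ((Fin (k+1)) → (Fin (k+1)) → Bool)) :
    ∀ (p : St) (K : ℕ), (∀ n t, K ≤ n → (p n t).1 = 0) →
      (∀ n t t', (∀ i, i < k+1-n → t i = t' i) → p n t = p n t') →
      ∃ (q : St) (K' : ℕ), K ≤ K' ∧ (∀ n t, K' ≤ n → (q n t).1 = 0) ∧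
        (∀ n t t', (∀ i, i < k+1-n → t i = t' i) → q n t = q n t') ∧
        (∀ n t, AExt (p n t) (q n t)) ∧
        (∀ c ∈ cs, ∀ x : XX, (∀ n, Agr (q n (cext k c n)) (x n)) → x ∈ D) := by
  classical
  induction cs with
  | nil =>
    intro p K h1 h2
    exact ⟨p, K, le_rfl, h1, h2, fun n t => AExt.rfl _, by simp⟩
  | cons c cs ih =>
    intro p K h1 h2
    obtain ⟨q1, K1, hK1, hq1triv, hq1dep, hq1ext, hq1den⟩ := ih p K h1 h2
    obtain ⟨r, K2, hK2, hrtriv, hrext, hrden⟩ :=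
      shrink D hDo hDd (fun n => q1 n (cext k c n)) K1 (fun n hn => hq1triv n _ hn)
    set q : St := fun n t => if (∀ i, i < k+1-n → t i = cext k c n i) then r n else q1 n t
      with hq
    have hq1q : ∀ n t, AExt (q1 n t) (q n t) := by
      intro n t
      by_cases h : ∀ i, i < k+1-n → t i = cext k c n i
      · simp only [hq, if_pos h]
        rw [hq1dep n t _ h]
        exact hrext n
      · simp only [hq, if_neg h]
        exact AExt.rfl _
    refine ⟨q, K2, hK1.trans hK2, ?_, ?_, fun n t => (hq1ext n t).trans (hq1q n t), ?_⟩
    · intro n t hn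
      by_cases h : ∀ i, i < k+1-n → t i = cext k c n i
      · simp only [hq, if_pos h]; exact hrtriv n hn
      · simp only [hq, if_neg h]; exact hq1triv n t (hK2.trans hn)
    · intro n t t' htt
      have hiff : (∀ i, i < k+1-n → t i = cext k c n i) ↔
          (∀ i, i < k+1-n → t' i = cext k c n i) :=
        forall_congr' fun i => imp_congr_right fun hi => by rw [htt i hi]
      by_cases h : ∀ i, i < k+1-n → t i = cext k c n i
      · simp only [hq, if_pos h, if_pos (hiff.mp h)]
      · simp only [hq, if_neg h, if_neg (fun h' => h (hiff.mpr h'))]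
        exact hq1dep n t t' htt
    · intro c' hc' x hx
      rcases List.mem_cons.mp hc' with hc' | hc'
      · subst hc'
        apply hrden
        intro n
        have heq : q n (cext k c' n) = r n := if_pos (fun i _ => _root_.rfl)
        rw [← heq]
        exact hx n
      · refine hq1den c' hc' x (fun n => ?_)
        exact Agr.mono (hq1q n (cext k c' n)) (hx n)

/-- A level of the fusion construction. -/
structure Lev (k : ℕ) where
  Φ : St
  K : ℕ
  triv : ∀ n t, K ≤ n → (Φ n t).1 = 0
  dep : ∀ n t t', (∀ i, i < k - n → t i = t' i) → Φ n t = Φ n t'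

/-- The relation between consecutive levels. -/
def Rel (D : Set XX) (k : ℕ) (a : Lev k) (b : Lev (k+1)) : Prop :=
  (∀ n t, AExt (a.Φ n t) (b.Φ n t)) ∧
  (∀ n t, n ≤ k → (a.Φ n t).1 < (b.Φ n t).1 ∧ (b.Φ n t).2 ((a.Φ n t).1) = t (k - n)) ∧
  (∀ t : ℕ → ℕ → Bool, ∀ x : XX, (∀ n, Agr (b.Φ n (t n)) (x n)) → x ∈ D)

lemma stage_step (D : Set XX) (hDo : IsOpen D) (hDd : Dense D) (k : ℕ) (a : Lev k) :
    ∃ b : Lev (k+1), Rel D k a b := by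
  classical
  set p1 : St := fun n t => if n ≤ k then
      ((a.Φ n t).1 + 1, Function.update (a.Φ n t).2 (a.Φ n t).1 (t (k-n)))
    else a.Φ n t with hp1
  have hp1dep : ∀ n t t', (∀ i, i < k+1-n → t i = t' i) → p1 n t = p1 n t' := by
    intro n t t' htt
    have hΦ : a.Φ n t = a.Φ n t' :=
      a.dep n t t' (fun i hi => htt i (lt_of_lt_of_le hi (Nat.sub_le_sub_right (Nat.le_succ k) n)))
    by_cases hn : n ≤ k
    · have hb : t (k-n) = t' (k-n) := htt _ (by omega)
      simp only [hp1, if_pos hn, hΦ, hb]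
    · simp only [hp1, if_neg hn, hΦ]
  have hp1triv : ∀ n t, max a.K (k+1) ≤ n → (p1 n t).1 = 0 := by
    intro n t hn
    simp only [hp1, if_neg (by omega : ¬ n ≤ k)]
    exact a.triv n t (le_trans (le_max_left _ _) hn)
  obtain ⟨q, K', hK', hqtriv, hqdep, hqext, hqden⟩ :=
    inner D hDo hDd k (Finset.univ.toList) p1 (max a.K (k+1)) hp1triv hp1dep
  have hext1 : ∀ n t, AExt (a.Φ n t) (p1 n t) := by
    intro n t
    by_cases hn : n ≤ k
    · simp only [hp1, if_pos hn]
      refine ⟨Nat.le_succ _, fun j hj => ?_⟩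
      exact Function.update_of_ne (Nat.ne_of_lt hj) _ _
    · simp only [hp1, if_neg hn]; exact AExt.rfl _
  refine ⟨⟨q, K', hqtriv, hqdep⟩, fun n t => (hext1 n t).trans (hqext n t), ?_, ?_⟩
  · intro n t hn
    have h1 : (p1 n t).1 = (a.Φ n t).1 + 1 := by simp only [hp1, if_pos hn]
    have h2 : (p1 n t).2 (a.Φ n t).1 = t (k - n) := by
      simp only [hp1, if_pos hn, Function.update_self]
    constructor
    · exact lt_of_lt_of_le (by omega : (a.Φ n t).1 < (p1 n t).1) (hqext n t).1
    · rw [(hqext n t).2 ((a.Φ n t).1) (by omega), h2]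
  · intro t x hx
    set c : Fin (k+1) → Fin (k+1) → Bool := fun n i => t n i with hc
    refine hqden c (Finset.mem_toList.mpr (Finset.mem_univ c)) x (fun n => ?_)
    have heq : q n (cext k c n) = q n (t n) := by
      apply hqdep
      intro i hi
      have hn : n < k + 1 := by omega
      have hik : i < k + 1 := by omega
      simp only [cext, hc, dif_pos (And.intro hn hik)]
    rw [heq]
    exact hx n

/-- The fusion sequence. -/
lemma main_seq (DD : ℕ → Set XX) (hDo : ∀ k, IsOpen (DD k)) (hDd : ∀ k, Dense (DD k)) :
    ∃ Φ : ℕ → St,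
      (∀ k n t t', (∀ i, i < k - n → t i = t' i) → Φ k n t = Φ k n t') ∧
      (∀ k n t, AExt (Φ k n t) (Φ (k+1) n t)) ∧
      (∀ k n t, n ≤ k → (Φ k n t).1 < (Φ (k+1) n t).1 ∧
        (Φ (k+1) n t).2 ((Φ k n t).1) = t (k - n)) ∧
      (∀ (k : ℕ) (t : ℕ → ℕ → Bool) (x : XX), (∀ n, Agr (Φ (k+1) n (t n)) (x n)) → x ∈ DD k) := by
  classical
  have step : ∀ k (a : Lev k), {b : Lev (k+1) // Rel (DD k) k a b} := by
    intro k a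
    have h := stage_step (DD k) (hDo k) (hDd k) k a
    exact Classical.choice (h.elim fun b hb => ⟨⟨b, hb⟩⟩)
  let base : Lev 0 := ⟨fun _ _ => (0, fun _ => false), 0, fun _ _ _ => rfl, fun _ _ _ _ => rfl⟩
  let seq : ∀ k, Lev k := fun k => Nat.rec base (fun k a => (step k a).1) k
  have hrel : ∀ k, Rel (DD k) k (seq k) (seq (k+1)) := fun k => (step k (seq k)).2
  exact ⟨fun k => (seq k).Φ, fun k => (seq k).dep, fun k => (hrel k).1,
    fun k => (hrel k).2.1, fun k => (hrel k).2.2⟩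

/-- Cylinder lemma for `2^ω`. -/
lemma cyl1 {D : Set (ℕ → Bool)} (hD : IsOpen D) {y : ℕ → Bool} (hy : y ∈ D) :
    ∃ M, ∀ x : ℕ → Bool, (∀ j ≤ M, x j = y j) → x ∈ D := by
  obtain ⟨I, u, hu, hsub⟩ := isOpen_pi_iff.mp hD y hy
  refine ⟨I.sup id, fun x hx => ?_⟩
  apply hsub
  intro j hj
  rw [hx j (Finset.le_sup (f := id) hj)]
  exact (hu j hj).2

end PolMyc

open PolMyc

/-- **Polarized Mycielski theorem** for infinite sequences: for any comeager subset `B`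
of `(2^ω)^ω` there is a sequence of perfect subsets of Cantor space whose product is
contained in `B`. -/
theorem polarized_mycielski (B : Set (ℕ → ℕ → Bool)) (hB : B ∈ residual (ℕ → ℕ → Bool)) :
    ∃ C : ℕ → Set (ℕ → Bool),
      (∀ n, Perfect (C n) ∧ (C n).Nonempty) ∧
      {x : ℕ → ℕ → Bool | ∀ n, x n ∈ C n} ⊆ B := by
  classical
  -- Extract a countable family of dense open sets.
  obtain ⟨S, hSo, hSd, hSc, hSB⟩ := mem_residual_iff.mp hB
  obtain ⟨DD, hDD⟩ := (hSc.insert Set.univ).exists_eq_range (insert_nonempty _ _)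
  have hDo : ∀ k, IsOpen (DD k) := by
    intro k
    have : DD k ∈ insert Set.univ S := hDD ▸ mem_range_self k
    rcases this with h | h
    · rw [h]; exact isOpen_univ
    · exact hSo _ h
  have hDd : ∀ k, Dense (DD k) := by
    intro k
    have : DD k ∈ insert Set.univ S := hDD ▸ mem_range_self k
    rcases this with h | h
    · rw [h]; exact dense_univ
    · exact hSd _ h
  have hDB : (⋂ k, DD k) ⊆ B := by
    refine subset_trans (fun x hx => ?_) hSB
    intro s hs
    have : s ∈ range DD := hDD ▸ mem_insert_iff.mpr (Or.inr hs)
    obtain ⟨k, rfl⟩ := this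
    exact mem_iInter.mp hx k
  obtain ⟨Φ, hdep, hext, hsplit, hden⟩ := main_seq DD hDo hDd
  -- Monotonicity across levels.
  have hmono : ∀ n t k k', k ≤ k' → AExt (Φ k n t) (Φ k' n t) := by
    intro n t k k' hkk
    induction k', hkk using Nat.le_induction with
    | base => exact AExt.rfl _
    | succ m hm ih => exact ih.trans (hext m n t)
  -- Length growth.
  have hlen : ∀ n t m, m ≤ (Φ (n+m) n t).1 := by
    intro n t m
    induction m with
    | zero => exact Nat.zero_le _
    | succ m ih =>
      have := (hsplit (n+m) n t (Nat.le_add_right n m)).1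
      calc m + 1 ≤ (Φ (n+m) n t).1 + 1 := by omega
        _ ≤ (Φ (n+m+1) n t).1 := this
  -- The limits.
  set f : ℕ → (ℕ → Bool) → (ℕ → Bool) := fun n t j => (Φ (n+j+1) n t).2 j with hf
  have hflen : ∀ n t j, j < (Φ (n+j+1) n t).1 := by
    intro n t j
    exact lt_of_lt_of_le (Nat.lt_succ_self j) (hlen n t (j+1))
  have hlim : ∀ n t k, Agr (Φ k n t) (f n t) := by
    intro n t k j hj
    show (Φ (n+j+1) n t).2 j = (Φ k n t).2 j
    rcases le_total k (n+j+1) with h | h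
    · exact (hmono n t k (n+j+1) h).2 j hj
    · exact ((hmono n t (n+j+1) k h).2 j (hflen n t j)).symm
  -- Injectivity of the limits.
  have hinj : ∀ n, Function.Injective (f n) := by
    intro n t t' hft
    by_contra hne
    have hex : ∃ i, t i ≠ t' i := by
      by_contra h; push_neg at h; exact hne (funext h)
    have hib : t (Nat.find hex) ≠ t' (Nat.find hex) := Nat.find_spec hex
    set i := Nat.find hex with hi
    have hmin : ∀ i' < i, t i' = t' i' := fun i' hi' => not_not.mp (Nat.find_min hex hi')
    set k := n + i with hk
    have hkn : k - n = i := by omega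
    have hΦ : Φ k n t = Φ k n t' := hdep k n t t' (fun i' hi' => hmin i' (by omega))
    set L := (Φ k n t).1 with hL
    have hs1 := hsplit k n t (by omega)
    have hs2 := hsplit k n t' (by omega)
    rw [← hΦ] at hs2
    have he1 : f n t L = t i := by
      rw [hlim n t (k+1) L hs1.1, hs1.2, hkn]
    have he2 : f n t' L = t' i := by
      rw [hlim n t' (k+1) L hs2.1, hs2.2, hkn]
    rw [hft] at he1
    exact hib (he1.symm.trans he2)
  -- Continuity of the limits.
  have hcont : ∀ n, Continuous (f n) := by
    intro n
    apply continuous_pi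
    intro j
    have hfac : (fun t => f n t j) = (fun v : Fin (n+j+1) → Bool =>
        (Φ (n+j+1) n (fun i => if h : i < n+j+1 then v ⟨i, h⟩ else false)).2 j) ∘
        (fun t (i : Fin (n+j+1)) => t i) := by
      funext t
      show (Φ (n+j+1) n t).2 j = _
      have heq : Φ (n+j+1) n t = Φ (n+j+1) n (fun i => if h : i < n+j+1 then t i else false) :=
        hdep _ _ _ _ (fun i hi => by rw [dif_pos (show i < n+j+1 by omega)])
      rw [heq]
      rfl
    rw [hfac]
    exact continuous_of_discreteTopology.comp (continuous_pi fun i => continuous_apply _)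
  refine ⟨fun n => Set.range (f n), fun n => ⟨⟨?_, ?_⟩, ⟨f n (fun _ => false), mem_range_self _⟩⟩, ?_⟩
  · exact (isCompact_range (hcont n)).isClosed
  · -- no isolated points
    rintro x ⟨t, rfl⟩
    rw [accPt_iff_nhds]
    intro U hU
    have hU' : (f n) ⁻¹' U ∈ nhds t := ContinuousAt.preimage_mem_nhds (hcont n).continuousAt hU
    obtain ⟨V, hVsub, hVo, htV⟩ := mem_nhds_iff.mp hU'
    obtain ⟨M, hM⟩ := cyl1 hVo htV
    set t' := Function.update t (M+1) (!(t (M+1))) with ht'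
    have ht'ne : t' ≠ t := by
      intro h
      have h2 := congrFun h (M+1)
      rw [ht', Function.update_self] at h2
      exact (t (M+1)).not_ne_self h2
    have ht'V : t' ∈ V := hM t' (fun j hj => Function.update_of_ne (by omega) _ _)
    exact ⟨f n t', ⟨hVsub ht'V, ⟨t', rfl⟩⟩, fun h => ht'ne (hinj n h)⟩
  · -- the product is contained in B
    intro x hx
    apply hDB
    rw [mem_iInter]
    intro k
    choose T hT using fun n => hx n
    refine hden k T x (fun n => ?_)
    intro j hj
    rw [← hT n]
    exact hlim n (T n) (k+1) j hj
end

section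
/- In the forcing notion ℚ of finite approximations to a perfect set of Cohen reals, for any dense open set O ⊆ 2^ω, the set D_O = { q ∈ ℚ : ∀ s ∈ 2^{n_q}, [f_q(s)] ⊆ O } is dense in ℚ. -/
/-- The forcing `ℚ` of finite approximations to a perfect set of Cohen reals:
a condition is a pair `(n, f)` with `f : 2^n → 2^{<ω}`. -/
def QCond : Type := Σ n : ℕ, (Fin n → Bool) → List Bool

/-- The extension relation on `ℚ`: `q ≤ p` iff `n_q ≥ n_p` and for each `s ∈ 2^{n_q}`,
`f_q(s)` end-extends `f_p(s ↾ n_p)`. -/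
def QLe (q p : QCond) : Prop :=
  ∃ h : p.1 ≤ q.1, ∀ s : Fin q.1 → Bool, p.2 (fun i => s (Fin.castLE h i)) <+: q.2 s

/-- The basic clopen set `[t] = {x ∈ 2^ω : t ⊆ x}` of Cantor space. -/
def cyl (t : List Bool) : Set (ℕ → Bool) :=
  {x | ∀ i : Fin t.length, x i = t.get i}

lemma cyl_isOpen (t : List Bool) : IsOpen (cyl t) := by
  have : cyl t = ⋂ i : Fin t.length, {x : ℕ → Bool | x i = t.get i} := by
    ext x; simp [cyl]
  rw [this]
  refine isOpen_iInter_of_finite fun i => ?_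
  have : {x : ℕ → Bool | x i = t.get i} = (fun x : ℕ → Bool => x (i : ℕ)) ⁻¹' {t.get i} := by
    ext x; simp
  rw [this]
  exact (isOpen_discrete _).preimage (continuous_apply (i : ℕ))

lemma cyl_nonempty (t : List Bool) : (cyl t).Nonempty := by
  refine ⟨fun i => if h : i < t.length then t.get ⟨i, h⟩ else false, ?_⟩
  intro i; simp [i.isLt]

/-- Key extension lemma: any finite string can be extended into `O`. -/
lemma extend_into (O : Set (ℕ → Bool)) (hopen : IsOpen O) (hdense : Dense O)
    (t : List Bool) : ∃ t' : List Bool, t <+: t' ∧ cyl t' ⊆ O := by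
  obtain ⟨x, hxO, hxt⟩ := hdense.exists_mem_open (cyl_isOpen t) (cyl_nonempty t)
  rw [isOpen_pi_iff] at hopen
  obtain ⟨I, u, hu, hsub⟩ := hopen x hxO
  set m : ℕ := max t.length ((I.sup id) + 1) with hm
  refine ⟨List.ofFn (fun i : Fin m => x i), ?_, ?_⟩
  · rw [List.prefix_iff_eq_take]
    apply List.ext_get
    · simp [hm]
    · intro n h1 h2
      have hn : n < t.length := h1
      have := hxt ⟨n, hn⟩
      simp_all [List.getElem_take, List.getElem_ofFn]
  · intro y hy
    apply hsub
    intro i hi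
    have him : i < m := by
      have : i ≤ I.sup id := Finset.le_sup (f := id) hi
      omega
    have hyi : y i = x i := by
      have := hy ⟨i, by simpa using him⟩
      simpa using this
    rw [hyi]
    exact (hu i hi).2

/-- For any dense open `O ⊆ 2^ω`, the set
`D_O = { q ∈ ℚ : ∀ s ∈ 2^{n_q}, [f_q(s)] ⊆ O }` is dense in `ℚ`. -/
theorem DO_dense (O : Set (ℕ → Bool)) (hopen : IsOpen O) (hdense : Dense O)
    (p : QCond) :
    ∃ q : QCond, QLe q p ∧ ∀ s : Fin q.1 → Bool, cyl (q.2 s) ⊆ O := by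
  choose e he1 he2 using fun s : Fin p.1 → Bool =>
    extend_into O hopen hdense (p.2 s)
  refine ⟨⟨p.1, e⟩, ⟨le_refl _, fun s => ?_⟩, he2⟩
  have : (fun i => s (Fin.castLE (le_refl p.1) i)) = s := by
    funext i; rfl
  rw [this]
  exact he1 s
end

section
/- There is no Baire measurable maximal E₀-discrete set: if A ⊆ 2^ω has the Baire property and no two distinct elements of A are E₀-equivalent, then A is not maximal among E₀-discrete sets (equivalently, any E₀-discrete set with the Baire property is meager, and a meager E₀-discrete set cannot be maximal). -/
/-- The equivalence relation `E₀` on Cantor space: equality on all but finitely many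
coordinates. -/
def E0 (x y : ℕ → Bool) : Prop := ∀ᶠ n in Filter.atTop, x n = y n

/-- `A` is `E₀`-discrete: no two distinct elements of `A` are `E₀`-related. -/
def E0Discrete (A : Set (ℕ → Bool)) : Prop :=
  ∀ x ∈ A, ∀ y ∈ A, E0 x y → x = y

/-- Flip the coordinates in a finite set `F`. -/
def cflip (F : Finset ℕ) (x : ℕ → Bool) : ℕ → Bool := fun n => if n ∈ F then !x n else x n

lemma cflip_involutive (F : Finset ℕ) : Function.Involutive (cflip F) := by
  intro x; funext n; simp only [cflip]; split <;> simp

lemma cflip_continuous (F : Finset ℕ) : Continuous (cflip F) := by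
  apply continuous_pi
  intro n
  by_cases h : n ∈ F
  · simpa [cflip, h, Function.comp_def] using
      (continuous_of_discreteTopology (f := Bool.not)).comp (continuous_apply n)
  · simpa [cflip, h] using continuous_apply n

/-- `cflip F` as a homeomorphism. -/
def cflipHomeo (F : Finset ℕ) : Homeomorph (ℕ → Bool) (ℕ → Bool) where
  toEquiv := Function.Involutive.toPerm _ (cflip_involutive F)
  continuous_toFun := cflip_continuous F
  continuous_invFun := cflip_continuous F

lemma e0_iff_exists_cflip {x y : ℕ → Bool} : E0 x y ↔ ∃ F : Finset ℕ, y = cflip F x := by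
  constructor
  · intro h
    rw [E0, Filter.eventually_atTop] at h
    obtain ⟨N, hN⟩ := h
    have hfin : {n | x n ≠ y n}.Finite := by
      apply Set.Finite.subset (Set.finite_Iio N)
      intro n hn
      by_contra hlt
      exact hn (hN n (le_of_not_gt hlt))
    refine ⟨hfin.toFinset, ?_⟩
    funext n
    simp only [cflip, Set.Finite.mem_toFinset, Set.mem_setOf_eq]
    by_cases h : x n = y n <;> simp [h]
    cases hx : x n <;> cases hy : y n <;> simp_all
  · rintro ⟨F, rfl⟩
    rw [E0, Filter.eventually_atTop]
    refine ⟨F.sup id + 1, fun n hn => ?_⟩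
    have : n ∉ F := fun hm => by
      have := Finset.le_sup (f := id) hm
      simp only [id_eq] at this
      omega
    simp [cflip, this]

lemma e0_symm {x y : ℕ → Bool} (h : E0 x y) : E0 y x := h.mono fun n hn => hn.symm

/-- A Baire measurable `E₀`-discrete set is meager. -/
lemma isMeagre_of_e0discrete (A : Set (ℕ → Bool)) (hBP : BaireMeasurableSet A)
    (hA : E0Discrete A) : IsMeagre A := by
  obtain ⟨U, hUopen, hAU⟩ := hBP.residualEq_isOpen
  rcases Set.eq_empty_or_nonempty U with rfl | ⟨x, hxU⟩
  · rw [IsMeagre]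
    rw [Filter.eventuallyEq_set] at hAU
    filter_upwards [hAU] with z hz
    simp only [Set.mem_empty_iff_false, iff_false] at hz
    exact hz
  · exfalso
    obtain ⟨I, u, hu, hsub⟩ := isOpen_pi_iff.mp hUopen x hxU
    set V : Set (ℕ → Bool) := ⋂ n ∈ I, (fun z => z n) ⁻¹' {x n} with hVdef
    have hVopen : IsOpen V := isOpen_biInter_finset fun n _ =>
      (continuous_apply n).isOpen_preimage _ (isOpen_discrete _)
    have hxV : x ∈ V := by simp [hVdef]
    have hVU : V ⊆ U := by
      intro z hz
      apply hsub
      intro n hn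
      have hzn : z n = x n := by
        simp only [hVdef, Set.mem_iInter, Set.mem_preimage, Set.mem_singleton_iff] at hz
        exact hz n hn
      rw [hzn]
      exact (hu n hn).2
    -- the meager set where A and U differ
    have hM : IsMeagre {z | ¬ (z ∈ A ↔ z ∈ U)} := by
      rw [IsMeagre]
      rw [Filter.eventuallyEq_set] at hAU
      filter_upwards [hAU] with z hz
      simp [hz]
    have hVA : IsMeagre (V \ A) := by
      apply hM.mono
      intro z hz
      simp only [Set.mem_setOf_eq]
      intro hiff
      exact hz.2 (hiff.mpr (hVU hz.1))
    -- flip coordinate m ∉ I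
    set m : ℕ := I.sup id + 1 with hm
    have hmI : m ∉ I := fun hmem => by
      have := Finset.le_sup (f := id) hmem
      simp only [id_eq] at this
      omega
    set f := cflip {m} with hf
    have hfmeager : IsMeagre (f ⁻¹' (V \ A)) :=
      hVA.preimage_of_isOpenMap (cflip_continuous _) (cflipHomeo {m}).isOpenMap
    have hres : (V \ A)ᶜ ∩ (f ⁻¹' (V \ A))ᶜ ∈ residual _ :=
      Filter.inter_mem hVA hfmeager
    obtain ⟨z, hzres, hzV⟩ := (dense_of_mem_residual hres).exists_mem_open hVopen ⟨x, hxV⟩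
    have hzA : z ∈ A := by
      by_contra hzA
      exact hzres.1 ⟨hzV, hzA⟩
    have hfzV : f z ∈ V := by
      simp only [hVdef, Set.mem_iInter, Set.mem_preimage, Set.mem_singleton_iff] at hzV ⊢
      intro n hn
      have : n ≠ m := fun h => hmI (h ▸ hn)
      simp only [hf, cflip, Finset.mem_singleton, this, if_false]
      exact hzV n hn
    have hfzA : f z ∈ A := by
      by_contra hfzA
      exact hzres.2 ⟨hfzV, hfzA⟩
    have he0 : E0 z (f z) := e0_iff_exists_cflip.mpr ⟨{m}, rfl⟩
    have := hA z hzA (f z) hfzA he0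
    have hm' : z m = f z m := by rw [← this]
    simp [hf, cflip] at hm'

/-- There is no Baire measurable maximal `E₀`-discrete set: any `E₀`-discrete set with
the Baire property is not maximal among `E₀`-discrete sets. -/
theorem no_baire_maximal_E0_discrete (A : Set (ℕ → Bool))
    (hBP : BaireMeasurableSet A) (hA : E0Discrete A) :
    ∃ y : ℕ → Bool, y ∉ A ∧ E0Discrete (insert y A) := by
  have hmeager : IsMeagre A := isMeagre_of_e0discrete A hBP hA
  -- the saturation of A is meager
  have hsat : IsMeagre (⋃ F : Finset ℕ, cflip F ⁻¹' A) := by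
    rw [IsMeagre, Set.compl_iUnion]
    refine countable_iInter_mem.mpr fun F => ?_
    exact hmeager.preimage_of_isOpenMap (cflip_continuous F) (cflipHomeo F).isOpenMap
  obtain ⟨y, hy⟩ := (dense_of_mem_residual hsat).nonempty
  have hy' : ∀ F : Finset ℕ, cflip F y ∉ A := by
    intro F hFA
    exact hy (Set.mem_iUnion.mpr ⟨F, hFA⟩)
  have hyA : y ∉ A := by
    have := hy' ∅
    have h0 : cflip ∅ y = y := by funext n; simp only [cflip]; simp
    simpa [h0] using this
  have hkey : ∀ a ∈ A, ¬ E0 y a := by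
    intro a ha he
    obtain ⟨F, hF⟩ := e0_iff_exists_cflip.mp he
    exact hy' F (by rwa [← hF])
  refine ⟨y, hyA, ?_⟩
  intro p hp q hq hpq
  rcases hp with rfl | hp
  · rcases hq with rfl | hq
    · rfl
    · exact absurd hpq (hkey q hq)
  · rcases hq with rfl | hq
    · exact absurd (e0_symm hpq) (hkey p hp)
    · exact hA p hp q hq hpq
end

section
/- Every E₀-discrete subset of 2^ω with the Baire property is meager. -/
open Filter Set Topology

/-- Flip the `n`-th coordinate. -/
def flipAt (n : ℕ) (x : ℕ → Bool) : ℕ → Bool := fun i => if i = n then !(x i) else x i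

lemma flipAt_invol (n : ℕ) : Function.Involutive (flipAt n) := by
  intro x
  funext i
  simp only [flipAt]
  by_cases h : i = n <;> simp [h]

lemma flipAt_continuous (n : ℕ) : Continuous (flipAt n) := by
  apply continuous_pi
  intro i
  have : (fun x : ℕ → Bool => flipAt n x i)
      = (fun b : Bool => if i = n then !b else b) ∘ (fun x => x i) := rfl
  rw [this]
  exact Continuous.comp continuous_of_discreteTopology (continuous_apply i)

/-- Flipping one coordinate as a homeomorphism. -/
def flipHomeo (n : ℕ) : (ℕ → Bool) ≃ₜ (ℕ → Bool) where
  toFun := flipAt n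
  invFun := flipAt n
  left_inv := flipAt_invol n
  right_inv := flipAt_invol n
  continuous_toFun := flipAt_continuous n
  continuous_invFun := flipAt_continuous n

/-- Every `E₀`-discrete subset of `2^ω` with the Baire property is meager. -/
theorem E0_discrete_baire_meager (A : Set (ℕ → Bool))
    (hBP : BaireMeasurableSet A)
    (hA : ∀ x ∈ A, ∀ y ∈ A, E0 x y → x = y) :
    IsMeagre A := by
  by_contra hm
  obtain ⟨U, hUo, hAU⟩ := hBP.residualEq_isOpen
  -- U is nonempty
  have hUne : U.Nonempty := by
    rcases U.eq_empty_or_nonempty with h | h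
    · exfalso
      subst h
      apply hm
      have : Aᶜ ∈ residual _ := by
        filter_upwards [hAU] with x hx
        exact fun h => (iff_of_eq hx).mp h
      exact this
    · exact h
  obtain ⟨x₀, hx₀⟩ := hUne
  -- basic open cylinder inside U
  obtain ⟨I, u, hI, hIU⟩ := isOpen_pi_iff.mp hUo x₀ hx₀
  set n : ℕ := (I.sup id) + 1 with hn
  set C : Set (ℕ → Bool) := {x | ∀ i < n, x i = x₀ i} with hC
  have hCU : C ⊆ U := by
    intro x hx
    apply hIU
    intro i hi
    have : i < n := Nat.lt_succ_of_le (Finset.le_sup (f := id) hi)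
    rw [hx i this]
    exact (hI i hi).2
  have hCo : IsOpen C := by
    have : C = Set.pi ↑(Finset.range n) (fun i => {x₀ i}) := by
      ext x; simp [hC, Set.mem_pi]
    rw [this]
    exact isOpen_set_pi (Finset.range n).finite_toSet (fun i _ => isOpen_discrete _)
  have hCx₀ : x₀ ∈ C := fun i _ => rfl
  -- flip map
  have hflip : Tendsto (flipAt n) (residual _) (residual _) :=
    tendsto_residual_of_isOpenMap (flipAt_continuous n)
      (flipHomeo n).isOpenMap
  -- residual set of agreement
  have h1 : {x | x ∈ A ↔ x ∈ U} ∈ residual _ := hAU.mono fun x hx => iff_of_eq hx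
  have hE : {x | (x ∈ A ↔ x ∈ U) ∧ (flipAt n x ∈ A ↔ flipAt n x ∈ U)} ∈ residual _ :=
    Filter.inter_mem h1 (hflip h1)
  have hd := dense_of_mem_residual hE
  obtain ⟨x, hxC, hx1, hx2⟩ := hd.inter_open_nonempty C hCo ⟨x₀, hCx₀⟩
  have hgC : flipAt n x ∈ C := by
    intro i hi
    have hin : i ≠ n := Nat.ne_of_lt hi
    simpa [flipAt, hin] using hxC i hi
  have hxA : x ∈ A := hx1.mpr (hCU hxC)
  have hgA : flipAt n x ∈ A := hx2.mpr (hCU hgC)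
  have hE0 : E0 x (flipAt n x) := by
    refine Filter.eventually_atTop.mpr ⟨n + 1, fun m hm => ?_⟩
    have : m ≠ n := (Nat.lt_of_lt_of_le (Nat.lt_succ_self n) hm).ne'
    simp [flipAt, this]
  have hxg := hA x hxA _ hgA hE0
  have hn' : x n = flipAt n x n := congrFun hxg n
  simp [flipAt] at hn'
end

section
/- Continuous reading of names for Sacks forcing: if ẋ is a Sacks-forcing name for an element of ω^ω and p is a Sacks condition, then there is q ≤ p and a continuous function F : [q] → ω^ω such that q forces that ẋ equals F applied to the generic real. -/
def IsTree (T : Set (List Bool)) : Prop :=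
  ∀ s ∈ T, ∀ t : List Bool, t <+: s → t ∈ T

def Splits (T : Set (List Bool)) (t : List Bool) : Prop :=
  t ∈ T ∧ t ++ [false] ∈ T ∧ t ++ [true] ∈ T

/-- Sacks conditions: perfect subtrees of `2^{<ω}`. -/
def PerfectTree (T : Set (List Bool)) : Prop :=
  T.Nonempty ∧ IsTree T ∧ ∀ s ∈ T, ∃ t, s <+: t ∧ Splits T t

def branches (T : Set (List Bool)) : Set (ℕ → Bool) :=
  {x | ∀ n : ℕ, (List.ofFn fun i : Fin n => x i) ∈ T}

namespace CRSaux

open List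

/-! ### generic list lemmas -/

lemma prefix_of_prefix_length_le' {l₁ l₂ l₃ : List Bool} (h1 : l₁ <+: l₃) (h2 : l₂ <+: l₃)
    (h : l₁.length ≤ l₂.length) : l₁ <+: l₂ := by
  rcases List.prefix_or_prefix_of_prefix h1 h2 with h' | h'
  · exact h'
  · rw [h'.eq_of_length (le_antisymm h'.length_le h)]

lemma prefix_trichotomy : ∀ (s u : List Bool), s <+: u ∨ u <+: s ∨
    ∃ v : List Bool, ∃ b c : Bool, b ≠ c ∧ v ++ [b] <+: s ∧ v ++ [c] <+: u
  | [], u => Or.inl ⟨u, rfl⟩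
  | a :: s, [] => Or.inr (Or.inl ⟨a :: s, rfl⟩)
  | a :: s, a' :: u => by
    by_cases h : a = a'
    · subst h
      rcases prefix_trichotomy s u with h | h | ⟨v, b, c, hbc, h1, h2⟩
      · exact Or.inl (List.cons_prefix_cons.2 ⟨rfl, h⟩)
      · exact Or.inr (Or.inl (List.cons_prefix_cons.2 ⟨rfl, h⟩))
      · refine Or.inr (Or.inr ⟨a :: v, b, c, hbc, ?_, ?_⟩)
        · rw [List.cons_append]; exact List.cons_prefix_cons.2 ⟨rfl, h1⟩
        · rw [List.cons_append]; exact List.cons_prefix_cons.2 ⟨rfl, h2⟩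
    · refine Or.inr (Or.inr ⟨[], a, a', h, ?_, ?_⟩)
      · simpa using List.cons_prefix_cons.2 ⟨rfl, ⟨s, rfl⟩⟩
      · simpa using List.cons_prefix_cons.2 ⟨rfl, ⟨u, rfl⟩⟩

lemma suffix_trichotomy (s u : List Bool) : s <:+ u ∨ u <:+ s ∨
    ∃ v : List Bool, ∃ b c : Bool, b ≠ c ∧ (b :: v) <:+ s ∧ (c :: v) <:+ u := by
  rcases prefix_trichotomy s.reverse u.reverse with h | h | ⟨v, b, c, hbc, h1, h2⟩
  · exact Or.inl (List.reverse_prefix.1 h)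
  · exact Or.inr (Or.inl (List.reverse_prefix.1 h))
  · refine Or.inr (Or.inr ⟨v.reverse, b, c, hbc, ?_, ?_⟩)
    · exact List.reverse_prefix.1 (by simpa using h1)
    · exact List.reverse_prefix.1 (by simpa using h2)

lemma exists_cons_suffix {t t' : List Bool} (h : t <:+ t') (hne : t ≠ t') :
    ∃ b, b :: t <:+ t' := by
  obtain ⟨u, rfl⟩ := h
  rcases List.eq_nil_or_concat u with rfl | ⟨L, b, rfl⟩
  · simp at hne
  · exact ⟨b, L, by simp⟩

/-! ### initial segments of branches -/

def ext (x : ℕ → Bool) (n : ℕ) : List Bool := List.ofFn fun i : Fin n => x i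

@[simp] lemma length_ext (x : ℕ → Bool) (n : ℕ) : (ext x n).length = n := by simp [ext]

lemma ext_succ (x : ℕ → Bool) (n : ℕ) : ext x (n + 1) = ext x n ++ [x n] := by
  rw [ext, List.ofFn_succ']
  simp only [Fin.coe_castSucc, Fin.val_last, List.concat_eq_append]
  rfl

lemma ext_prefix (x : ℕ → Bool) {m n : ℕ} (h : m ≤ n) : ext x m <+: ext x n := by
  induction n, h using Nat.le_induction with
  | base => exact List.prefix_rfl
  | succ n hmn ih => rw [ext_succ]; exact ih.trans (List.prefix_append _ _)

def IsPref (s : List Bool) (x : ℕ → Bool) : Prop := s = ext x s.length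

lemma isPref_of_prefix_ext {s : List Bool} {x : ℕ → Bool} {n : ℕ} (h : s <+: ext x n) :
    IsPref s x := by
  have hl : s.length ≤ n := by simpa using h.length_le
  have h1 := List.prefix_iff_eq_take.1 h
  have h2 := List.prefix_iff_eq_take.1 (ext_prefix x hl)
  rw [length_ext] at h2
  exact h1.trans h2.symm

lemma IsPref.prefix_ext {s : List Bool} {x : ℕ → Bool} (h : IsPref s x) {n : ℕ}
    (hn : s.length ≤ n) : s <+: ext x n := by
  have := ext_prefix x hn (m := s.length)
  rwa [← h] at this

lemma IsPref.mono {s s' : List Bool} {x : ℕ → Bool} (h : s <+: s') (h' : IsPref s' x) :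
    IsPref s x :=
  isPref_of_prefix_ext (n := s'.length) (h' ▸ h)

lemma IsPref.eq_snoc {v : List Bool} {b : Bool} {x : ℕ → Bool} (h : IsPref (v ++ [b]) x) :
    x v.length = b := by
  have h1 : v ++ [b] = ext x (v.length + 1) := by simpa [IsPref] using h
  rw [ext_succ] at h1
  have h2 := (List.append_inj h1 (by simp)).2
  simp only [List.cons.injEq, and_true] at h2
  exact h2.symm

/-! ### restriction of a tree to a node -/

def rstr (T : Set (List Bool)) (s : List Bool) : Set (List Bool) :=
  {u | u ∈ T ∧ (u <+: s ∨ s <+: u)}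

lemma rstr_subset (T : Set (List Bool)) (s : List Bool) : rstr T s ⊆ T := fun _ hu => hu.1

lemma rstr_perfect {T : Set (List Bool)} {s : List Bool} (hT : PerfectTree T) (hs : s ∈ T) :
    PerfectTree (rstr T s) := by
  obtain ⟨hne, htree, hsp⟩ := hT
  refine ⟨⟨s, hs, Or.inl List.prefix_rfl⟩, ?_, ?_⟩
  · rintro u ⟨hu, hcomp⟩ v hv
    refine ⟨htree u hu v hv, ?_⟩
    rcases hcomp with h | h
    · exact Or.inl (hv.trans h)
    · exact List.prefix_or_prefix_of_prefix hv h
  · rintro u ⟨hu, hcomp⟩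
    obtain ⟨w, hws, hwu, hwT⟩ : ∃ w, s <+: w ∧ u <+: w ∧ w ∈ T := by
      rcases hcomp with h | h
      · exact ⟨s, List.prefix_rfl, h, hs⟩
      · exact ⟨u, h, List.prefix_rfl, hu⟩
    obtain ⟨t', hwt', hsp'⟩ := hsp w hwT
    have hst' : s <+: t' := hws.trans hwt'
    exact ⟨t', hwu.trans hwt', ⟨hsp'.1, Or.inr hst'⟩,
      ⟨hsp'.2.1, Or.inr (hst'.trans (List.prefix_append _ _))⟩,
      ⟨hsp'.2.2, Or.inr (hst'.trans (List.prefix_append _ _))⟩⟩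

lemma nil_mem {T : Set (List Bool)} (hT : PerfectTree T) : [] ∈ T := by
  obtain ⟨⟨u, hu⟩, htree, -⟩ := hT
  exact htree u hu [] ⟨u, rfl⟩

open Classical in
noncomputable def splitNode (T : Set (List Bool)) : List Bool :=
  if h : ∃ t, Splits T t then h.choose else []

lemma splits_splitNode {T : Set (List Bool)} (hT : PerfectTree T) : Splits T (splitNode T) := by
  have h : ∃ t, Splits T t := by
    obtain ⟨t, -, hsp⟩ := hT.2.2 [] (nil_mem hT)
    exact ⟨t, hsp⟩
  rw [splitNode, dif_pos h]
  exact h.choose_spec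


structure Setup where
  xdot : Set (List Bool) → List ℕ
  hmono : ∀ p q, PerfectTree p → PerfectTree q → q ⊆ p → xdot p <+: xdot q
  htotal : ∀ p, PerfectTree p → ∀ n : ℕ, ∃ q, PerfectTree q ∧ q ⊆ p ∧ n ≤ (xdot q).length
  p : Set (List Bool)
  hp : PerfectTree p

variable (S : Setup)

noncomputable def Dstep (b : Bool) (t : List Bool)
    (T : {T : Set (List Bool) // PerfectTree T ∧ T ⊆ S.p ∧ t.length ≤ (S.xdot T).length}) :
    {T' : Set (List Bool) // PerfectTree T' ∧ T' ⊆ S.p ∧ (b :: t).length ≤ (S.xdot T').length} :=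
  have hmem : splitNode T.1 ++ [b] ∈ T.1 := by
    have hsp := splits_splitNode T.2.1
    cases b
    · exact hsp.2.1
    · exact hsp.2.2
  have h := S.htotal (rstr T.1 (splitNode T.1 ++ [b])) (rstr_perfect T.2.1 hmem) (t.length + 1)
  ⟨h.choose, h.choose_spec.1, (h.choose_spec.2.1.trans (rstr_subset _ _)).trans T.2.2.1,
    by simpa using h.choose_spec.2.2⟩

noncomputable def D :
    (t : List Bool) → {T : Set (List Bool) // PerfectTree T ∧ T ⊆ S.p ∧ t.length ≤ (S.xdot T).length} :=
  fun t => List.rec ⟨S.p, S.hp, subset_rfl, Nat.zero_le _⟩ (fun b t ih => Dstep S b t ih) t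

noncomputable def Pt (t : List Bool) : Set (List Bool) := (D S t).1

noncomputable def Nt (t : List Bool) : List Bool := splitNode (Pt S t)

lemma Pt_perfect (t : List Bool) : PerfectTree (Pt S t) := (D S t).2.1
lemma Pt_subset (t : List Bool) : Pt S t ⊆ S.p := (D S t).2.2.1
lemma Pt_len (t : List Bool) : t.length ≤ (S.xdot (Pt S t)).length := (D S t).2.2.2
lemma Nt_splits (t : List Bool) : Splits (Pt S t) (Nt S t) := splits_splitNode (Pt_perfect S t)
lemma Nt_mem (t : List Bool) : Nt S t ∈ Pt S t := (Nt_splits S t).1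

lemma D_cons (b : Bool) (t : List Bool) : D S (b :: t) = Dstep S b t (D S t) := rfl

lemma Pt_cons_subset (b : Bool) (t : List Bool) :
    Pt S (b :: t) ⊆ rstr (Pt S t) (Nt S t ++ [b]) := by
  have hmem : Nt S t ++ [b] ∈ Pt S t := by
    have hsp := Nt_splits S t
    cases b
    · exact hsp.2.1
    · exact hsp.2.2
  exact (S.htotal (rstr (Pt S t) (Nt S t ++ [b])) (rstr_perfect (Pt_perfect S t) hmem)
    (t.length + 1)).choose_spec.2.1

lemma Nt_cons (b : Bool) (t : List Bool) : Nt S t ++ [b] <+: Nt S (b :: t) := by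
  have hsub := Pt_cons_subset S b t
  have hsp : Splits (Pt S (b :: t)) (Nt S (b :: t)) := Nt_splits S (b :: t)
  rcases (hsub hsp.1).2 with h | h
  swap
  · exact h
  rcases eq_or_lt_of_le h.length_le with hlen | hlen
  · rw [h.eq_of_length hlen]
  exfalso
  have hlen' : (Nt S (b :: t)).length < (Nt S t).length + 1 := by simpa using hlen
  have key : ∀ c : Bool, Nt S (b :: t) ++ [c] <+: Nt S t ++ [b] ∨
      Nt S t ++ [b] = Nt S (b :: t) ++ [c] := by
    intro c
    have hc : Nt S (b :: t) ++ [c] ∈ Pt S (b :: t) := by cases c; exacts [hsp.2.1, hsp.2.2]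
    rcases (hsub hc).2 with h' | h'
    · exact Or.inl h'
    · refine Or.inr (h'.eq_of_length ?_)
      have h2 := h'.length_le
      simp only [List.length_append, List.length_cons, List.length_nil] at h2 ⊢
      omega
  have heq : Nt S (b :: t) ++ [false] = Nt S (b :: t) ++ [true] := by
    rcases key false with h1 | h1 <;> rcases key true with h2 | h2
    · rcases List.prefix_or_prefix_of_prefix h1 h2 with h3 | h3
      · exact h3.eq_of_length (by simp)
      · exact (h3.eq_of_length (by simp)).symm
    · rw [h2] at h1; exact h1.eq_of_length (by simp)
    · rw [h1] at h2; exact (h2.eq_of_length (by simp)).symm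
    · rw [← h1, ← h2]
  simp at heq

lemma Nt_len_lt (b : Bool) (t : List Bool) : (Nt S t).length < (Nt S (b :: t)).length := by
  have := (Nt_cons S b t).length_le
  simp at this
  omega

lemma Pt_mono (t : List Bool) : ∀ t', t <:+ t' → Pt S t' ⊆ Pt S t := by
  intro t'
  induction t' with
  | nil => intro h; rw [List.suffix_nil.1 h]
  | cons b t'' ih =>
    intro h
    rcases List.suffix_cons_iff.1 h with h' | h'
    · rw [h']
    · exact ((Pt_cons_subset S b t'').trans (rstr_subset _ _)).trans (ih h')

lemma Nt_mono (t : List Bool) : ∀ t', t <:+ t' → Nt S t <+: Nt S t' := by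
  intro t'
  induction t' with
  | nil => intro h; rw [List.suffix_nil.1 h]
  | cons b t'' ih =>
    intro h
    rcases List.suffix_cons_iff.1 h with h' | h'
    · rw [h']
    · exact (ih h').trans ((List.prefix_append _ _).trans (Nt_cons S b t''))

lemma Nt_len_mono (t : List Bool) : ∀ t', t <:+ t' → t ≠ t' →
    (Nt S t).length < (Nt S t').length := by
  intro t'
  induction t' with
  | nil => intro h hne; exact absurd (List.suffix_nil.1 h) hne
  | cons b t'' ih =>
    intro h hne
    rcases List.suffix_cons_iff.1 h with h' | h'
    · exact absurd h' hne
    · exact lt_of_le_of_lt (Nt_mono S t t'' h').length_le (Nt_len_lt S b t'')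

lemma Nt_pref_compat {x : ℕ → Bool} {t₁ t₂ : List Bool}
    (h₁ : IsPref (Nt S t₁) x) (h₂ : IsPref (Nt S t₂) x) : t₁ <:+ t₂ ∨ t₂ <:+ t₁ := by
  rcases suffix_trichotomy t₁ t₂ with h | h | ⟨v, b, c, hbc, hb, hc⟩
  · exact Or.inl h
  · exact Or.inr h
  · exfalso
    have hb' : Nt S v ++ [b] <+: Nt S t₁ := (Nt_cons S b v).trans (Nt_mono S _ _ hb)
    have hc' : Nt S v ++ [c] <+: Nt S t₂ := (Nt_cons S c v).trans (Nt_mono S _ _ hc)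
    have e1 : x (Nt S v).length = b := (IsPref.mono hb' h₁).eq_snoc
    have e2 : x (Nt S v).length = c := (IsPref.mono hc' h₂).eq_snoc
    exact hbc (e1.symm.trans e2)

/-! ### the fusion tree and reading function -/

def Q : Set (List Bool) := {s | ∃ t, s <+: Nt S t}

lemma Q_perfect : PerfectTree (Q S) := by
  refine ⟨⟨Nt S [], [], List.prefix_rfl⟩, ?_, ?_⟩
  · rintro u ⟨t, hut⟩ v hv
    exact ⟨t, hv.trans hut⟩
  · rintro u ⟨t, hut⟩
    exact ⟨Nt S t, hut, ⟨t, List.prefix_rfl⟩,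
      ⟨false :: t, Nt_cons S false t⟩, ⟨true :: t, Nt_cons S true t⟩⟩

lemma Q_subset : Q S ⊆ S.p := by
  rintro s ⟨t, h⟩
  exact Pt_subset S t ((Pt_perfect S t).2.1 _ (Nt_mem S t) s h)

lemma mem_branches_iff {T : Set (List Bool)} {x : ℕ → Bool} :
    x ∈ branches T ↔ ∀ n, ext x n ∈ T := Iff.rfl

lemma branches_mono {T T' : Set (List Bool)} (h : T ⊆ T') : branches T ⊆ branches T' :=
  fun _ hx n => h (hx n)

lemma isPref_mem {T : Set (List Bool)} {x : ℕ → Bool} {s : List Bool}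
    (hx : x ∈ branches T) (h : IsPref s x) : s ∈ T := by
  rw [h]; exact hx _

lemma pref_nil {x : ℕ → Bool} (hx : x ∈ branches (Q S)) : IsPref (Nt S []) x := by
  obtain ⟨t'', h⟩ := hx (Nt S []).length
  have h0 : Nt S [] <+: Nt S t'' := Nt_mono S [] t'' ⟨t'', by simp⟩
  exact isPref_of_prefix_ext (prefix_of_prefix_length_le' h0 h (by simp))

lemma pref_step {x : ℕ → Bool} {t : List Bool} (hx : x ∈ branches (Q S))
    (h : IsPref (Nt S t) x) : ∃ b, IsPref (Nt S (b :: t)) x := by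
  obtain ⟨m, hm1, hm2, hm3⟩ : ∃ m, (Nt S (false :: t)).length ≤ m ∧
      (Nt S (true :: t)).length ≤ m ∧ (Nt S t).length < m :=
    ⟨(Nt S (false :: t)).length + (Nt S (true :: t)).length + (Nt S t).length + 1,
      by omega, by omega, by omega⟩
  obtain ⟨t'', h2⟩ := hx m
  have h3 : Nt S t <+: Nt S t'' := (h.prefix_ext hm3.le).trans h2
  have hlen2 : m ≤ (Nt S t'').length := by simpa using h2.length_le
  have hts : t <:+ t'' := by
    rcases suffix_trichotomy t t'' with h' | h' | ⟨v, b, c, hbc, hb, hc⟩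
    · exact h'
    · rcases eq_or_ne t'' t with rfl | hne
      · exact List.suffix_rfl
      · exfalso
        have h4 := Nt_len_mono S t'' t h' hne
        have h5 := h3.length_le
        omega
    · exfalso
      have hb' : Nt S v ++ [b] <+: Nt S t := (Nt_cons S b v).trans (Nt_mono S _ _ hb)
      have hc' : Nt S v ++ [c] <+: Nt S t'' := (Nt_cons S c v).trans (Nt_mono S _ _ hc)
      have e1 : x (Nt S v).length = b := (IsPref.mono hb' h).eq_snoc
      have hvlen : (Nt S v).length + 1 ≤ m := by
        have h6 := hb'.length_le
        simp only [List.length_append, List.length_cons, List.length_nil] at h6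
        omega
      have h7 : Nt S v ++ [c] <+: ext x m :=
        prefix_of_prefix_length_le' hc' h2 (by simpa using hvlen)
      have e2 : x (Nt S v).length = c := (isPref_of_prefix_ext h7).eq_snoc
      exact hbc (e1.symm.trans e2)
  have hne : t ≠ t'' := by
    rintro rfl
    omega
  obtain ⟨b, hb⟩ := exists_cons_suffix hts hne
  refine ⟨b, ?_⟩
  have hb' : Nt S (b :: t) <+: Nt S t'' := Nt_mono S _ _ hb
  have hblen : (Nt S (b :: t)).length ≤ m := by cases b <;> assumption
  exact isPref_of_prefix_ext (prefix_of_prefix_length_le' hb' h2 (by simpa using hblen))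

lemma path {x : ℕ → Bool} (hx : x ∈ branches (Q S)) :
    ∀ k, ∃ t : List Bool, t.length = k ∧ IsPref (Nt S t) x := by
  intro k
  induction k with
  | zero => exact ⟨[], rfl, pref_nil S hx⟩
  | succ k ih =>
    obtain ⟨t, hlen, hpref⟩ := ih
    obtain ⟨b, hb⟩ := pref_step S hx hpref
    exact ⟨b :: t, by simp [hlen], hb⟩

lemma xdot_agree {x : ℕ → Bool} {t₁ t₂ : List Bool} {i : ℕ}
    (h₁ : IsPref (Nt S t₁) x) (h₂ : IsPref (Nt S t₂) x)
    (hi₁ : i < (S.xdot (Pt S t₁)).length) (hi₂ : i < (S.xdot (Pt S t₂)).length) :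
    (S.xdot (Pt S t₁))[i]'hi₁ = (S.xdot (Pt S t₂))[i]'hi₂ := by
  rcases Nt_pref_compat S h₁ h₂ with h | h
  · exact (S.hmono _ _ (Pt_perfect S t₁) (Pt_perfect S t₂) (Pt_mono S _ _ h)).getElem hi₁
  · exact ((S.hmono _ _ (Pt_perfect S t₂) (Pt_perfect S t₁) (Pt_mono S _ _ h)).getElem hi₂).symm

open Classical in
noncomputable def Fdef (x : ℕ → Bool) (n : ℕ) : ℕ :=
  if h : ∃ t, IsPref (Nt S t) x ∧ n < (S.xdot (Pt S t)).length
  then (S.xdot (Pt S h.choose))[n]'h.choose_spec.2 else 0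

lemma Fdef_spec {x : ℕ → Bool} {t : List Bool} {n : ℕ} (h1 : IsPref (Nt S t) x)
    (h2 : n < (S.xdot (Pt S t)).length) : Fdef S x n = (S.xdot (Pt S t))[n]'h2 := by
  have h : ∃ t, IsPref (Nt S t) x ∧ n < (S.xdot (Pt S t)).length := ⟨t, h1, h2⟩
  rw [Fdef, dif_pos h]
  exact xdot_agree S h.choose_spec.1 h1 h.choose_spec.2 h2

end CRSaux

/-- **Continuous reading of names for Sacks forcing.**  A name `ẋ` for an element of
`ω^ω` is rendered combinatorially as the assignment to each Sacks condition `p` of the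
finite initial segment `ẋ p` of the name's value decided by `p`; the name hypotheses say
that these decisions are coherent (stronger conditions decide more) and that below any
condition arbitrarily long initial segments get decided (by density).  The conclusion:
below any `p` there is `q ≤ p` and a continuous `F : [q] → ω^ω` such that `q` forces
`ẋ = F(s_G)`, i.e. every `r ≤ q` decides `ẋ` compatibly with `F` on all branches of
`r` (in particular on the generic branch). -/
theorem continuous_reading_sacks (xdot : Set (List Bool) → List ℕ)
    (hmono : ∀ p q, PerfectTree p → PerfectTree q → q ⊆ p → xdot p <+: xdot q)
    (htotal : ∀ p, PerfectTree p → ∀ n : ℕ, ∃ q, PerfectTree q ∧ q ⊆ p ∧ n ≤ (xdot q).length)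
    (p : Set (List Bool)) (hp : PerfectTree p) :
    ∃ q, PerfectTree q ∧ q ⊆ p ∧ ∃ F : (ℕ → Bool) → ℕ → ℕ,
      ContinuousOn F (branches q) ∧
      ∀ r, PerfectTree r → r ⊆ q → ∀ x ∈ branches r,
        ∀ i : Fin (xdot r).length, F x i = (xdot r).get i := by
  classical
  set S : CRSaux.Setup := ⟨xdot, hmono, htotal, p, hp⟩ with hS
  refine ⟨CRSaux.Q S, CRSaux.Q_perfect S, CRSaux.Q_subset S, CRSaux.Fdef S, ?_, ?_⟩
  · rw [continuousOn_pi]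
    intro n x hx
    obtain ⟨t, htlen, htp⟩ := CRSaux.path S hx (n + 1)
    have hn : n < (xdot (CRSaux.Pt S t)).length :=
      lt_of_lt_of_le (by omega) (htlen ▸ CRSaux.Pt_len S t)
    set m := (CRSaux.Nt S t).length with hm
    set c := (xdot (CRSaux.Pt S t))[n]'hn with hc
    set U : Set (ℕ → Bool) := {x' | ∀ i : Fin m, x' i = x i} with hUdef
    have hU : IsOpen U := by
      have : U = ⋂ i : Fin m, {x' : ℕ → Bool | x' i = x i} := by
        ext x'; simp [hUdef, Set.mem_iInter]
      rw [this]
      refine isOpen_iInter_of_finite fun i => ?_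
      have h0 : IsOpen ((fun p : ℕ → Bool => p (i : ℕ)) ⁻¹' {x (i : ℕ)}) :=
        IsOpen.preimage (continuous_apply ((i : ℕ))) (isOpen_discrete _)
      exact h0
    have hxU : x ∈ U := fun i => rfl
    have hev : ∀ᶠ x' in nhdsWithin x (branches (CRSaux.Q S)), CRSaux.Fdef S x' n = c := by
      filter_upwards [mem_nhdsWithin_of_mem_nhds (hU.mem_nhds hxU)] with x' hx'
      have hext : CRSaux.ext x' m = CRSaux.ext x m :=
        congrArg List.ofFn (funext fun i => hx' i)
      have htp' : CRSaux.IsPref (CRSaux.Nt S t) x' := htp.trans hext.symm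
      exact CRSaux.Fdef_spec S htp' hn
    have hcx : CRSaux.Fdef S x n = c := CRSaux.Fdef_spec S htp hn
    have : Filter.Tendsto (fun x' => CRSaux.Fdef S x' n)
        (nhdsWithin x (branches (CRSaux.Q S))) (nhds c) :=
      Filter.Tendsto.congr' (hev.mono fun x' h => h.symm) tendsto_const_nhds
    simpa [ContinuousWithinAt, hcx] using this
  · intro r hr hrq x hx i
    obtain ⟨t, htlen, htp⟩ := CRSaux.path S (CRSaux.branches_mono hrq hx) ((i : ℕ) + 1)
    have hi : (i : ℕ) < (xdot (CRSaux.Pt S t)).length :=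
      lt_of_lt_of_le (by omega) (htlen ▸ CRSaux.Pt_len S t)
    have hNtr : CRSaux.Nt S t ∈ r := CRSaux.isPref_mem hx htp
    have hr' : PerfectTree (CRSaux.rstr r (CRSaux.Nt S t)) := CRSaux.rstr_perfect hr hNtr
    have hsub1 : CRSaux.rstr r (CRSaux.Nt S t) ⊆ CRSaux.Pt S t := by
      rintro u ⟨hur, hcomp⟩
      rcases hcomp with h | h
      · exact (CRSaux.Pt_perfect S t).2.1 _ (CRSaux.Nt_mem S t) u h
      · obtain ⟨t'', hu⟩ := hrq hur
        have h3 : CRSaux.Nt S t <+: CRSaux.Nt S t'' := h.trans hu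
        have hts : t <:+ t'' := by
          rcases CRSaux.suffix_trichotomy t t'' with h' | h' | ⟨v, b, cb, hbc, hb, hcs⟩
          · exact h'
          · rcases eq_or_ne t'' t with rfl | hne
            · exact List.suffix_rfl
            · exfalso
              have h4 := CRSaux.Nt_len_mono S t'' t h' hne
              have h5 := h3.length_le
              omega
          · exfalso
            have hb' : CRSaux.Nt S v ++ [b] <+: CRSaux.Nt S t'' :=
              ((CRSaux.Nt_cons S b v).trans (CRSaux.Nt_mono S _ _ hb)).trans h3
            have hc' : CRSaux.Nt S v ++ [cb] <+: CRSaux.Nt S t'' :=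
              (CRSaux.Nt_cons S cb v).trans (CRSaux.Nt_mono S _ _ hcs)
            have h6 := CRSaux.prefix_of_prefix_length_le' hb' hc' (by simp)
            have h7 := h6.eq_of_length (by simp)
            simp only [List.append_cancel_left_eq, List.cons.injEq, and_true] at h7
            exact hbc h7
        exact CRSaux.Pt_mono S t t'' hts
          ((CRSaux.Pt_perfect S t'').2.1 _ (CRSaux.Nt_mem S t'') u hu)
    have hpre1 : xdot r <+: xdot (CRSaux.rstr r (CRSaux.Nt S t)) :=
      hmono r _ hr hr' (CRSaux.rstr_subset _ _)
    have hpre2 : xdot (CRSaux.Pt S t) <+: xdot (CRSaux.rstr r (CRSaux.Nt S t)) :=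
      hmono _ _ (CRSaux.Pt_perfect S t) hr' hsub1
    have hF : CRSaux.Fdef S x i = (xdot (CRSaux.Pt S t))[(i : ℕ)]'hi :=
      CRSaux.Fdef_spec S htp hi
    have e1 := hpre1.getElem i.isLt
    have e2 := hpre2.getElem hi
    rw [List.get_eq_getElem]
    exact hF.trans (e2.trans e1.symm)
end

section
/- Galvin's theorem for Sacks forcing: for any perfect subtree p of 2^{<ω} and any Baire measurable coloring c : [[p]]² → {0,1} of unordered pairs of branches of p, there is a perfect subtree q ⊆ p such that [q] is homogeneous for c (c is constant on [[q]]²). -/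
namespace Galvin

/-- The length-`n` prefix of `x` as a list. -/
def pfx (x : ℕ → Bool) (n : ℕ) : List Bool := List.ofFn fun i : Fin n => x i

@[simp] lemma pfx_length (x : ℕ → Bool) (n : ℕ) : (pfx x n).length = n := by
  simp [pfx]

@[simp] lemma pfx_getElem (x : ℕ → Bool) (n i : ℕ) (h : i < (pfx x n).length) :
    (pfx x n)[i] = x i := by
  simp [pfx]

lemma pfx_take (x : ℕ → Bool) {a b : ℕ} (h : a ≤ b) : (pfx x b).take a = pfx x a := by
  apply List.ext_getElem
  · simp [h]
  · intro i h1 h2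
    simp

lemma pfx_prefix (x : ℕ → Bool) {a b : ℕ} (h : a ≤ b) : pfx x a <+: pfx x b := by
  rw [← pfx_take x h]; exact List.take_prefix _ _

lemma mem_branches_iff {T : Set (List Bool)} {x : ℕ → Bool} :
    x ∈ branches T ↔ ∀ n, pfx x n ∈ T := Iff.rfl

/-- `x` extends the node `s`. -/
def Ext (s : List Bool) (x : ℕ → Bool) : Prop := pfx x s.length = s

lemma ext_pfx (x : ℕ → Bool) (n : ℕ) : Ext (pfx x n) x := by
  simp [Ext]

lemma Ext.prefix_pfx {s : List Bool} {x : ℕ → Bool} (h : Ext s x) {n : ℕ}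
    (hn : s.length ≤ n) : s <+: pfx x n := by
  rw [← h]; exact pfx_prefix x hn

lemma ext_mono {s s' : List Bool} {x : ℕ → Bool} (hss : s' <+: s) (h : Ext s x) :
    Ext s' x := by
  have h1 : s' = s.take s'.length := List.prefix_iff_eq_take.mp hss
  rw [Ext, h1, ← h, pfx_take x hss.length_le, pfx_length]

lemma ext_iff_forall {s : List Bool} {x : ℕ → Bool} :
    Ext s x ↔ ∀ i : ℕ, ∀ h : i < s.length, x i = s[i] := by
  constructor
  · intro h i hi
    have := List.getElem_of_eq h (by simpa using hi)
    simpa using this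
  · intro h
    apply List.ext_getElem (by simp)
    intro i h1 h2
    simp [pfx, h i h2]

lemma ext_append_bit {s : List Bool} {i : Bool} {x : ℕ → Bool} :
    Ext (s ++ [i]) x ↔ Ext s x ∧ x s.length = i := by
  simp only [ext_iff_forall]
  constructor
  · intro h
    refine ⟨fun j hj => ?_, ?_⟩
    · have := h j (by simp; omega)
      rwa [List.getElem_append_left hj] at this
    · have := h s.length (by simp)
      simpa using this
  · intro ⟨h1, h2⟩ j hj
    rcases lt_or_ge j s.length with hj' | hj'
    · rw [List.getElem_append_left hj']; exact h1 j hj'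
    · have hj'' : j = s.length := by simp at hj; omega
      subst hj''
      rw [List.getElem_append_right (le_refl _)]
      simpa using h2

lemma ext_agree {s : List Bool} {x y : ℕ → Bool} (hx : Ext s x) (hy : Ext s y)
    {i : ℕ} (hi : i < s.length) : x i = y i := by
  rw [ext_iff_forall] at hx hy
  rw [hx i hi, hy i hi]






variable {p : Set (List Bool)}

lemma isOpen_ext (s : List Bool) : IsOpen {x : ℕ → Bool | Ext s x} := by
  have : {x : ℕ → Bool | Ext s x} =
      ⋂ i : Fin s.length, {x : ℕ → Bool | x i = s[i]} := by
    ext x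
    simp only [Set.mem_setOf_eq, Set.mem_iInter, ext_iff_forall]
    exact ⟨fun h i => h i i.2, fun h i hi => h ⟨i, hi⟩⟩
  rw [this]
  refine isOpen_iInter_of_finite fun i => ?_
  have h2 : {x : ℕ → Bool | x i = s[i]} = (fun f : ℕ → Bool => f (i : ℕ)) ⁻¹' {s[(i:ℕ)]} := rfl
  rw [h2]
  exact (continuous_apply _).isOpen_preimage _ (isOpen_discrete _)

lemma isClosed_branches (p : Set (List Bool)) : IsClosed (branches p) := by
  rw [← isOpen_compl_iff]
  rw [isOpen_iff_forall_mem_open]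
  intro x hx
  simp only [Set.mem_compl_iff, mem_branches_iff, not_forall] at hx
  obtain ⟨n, hn⟩ := hx
  refine ⟨{y | Ext (pfx x n) y}, ?_, isOpen_ext _, ext_pfx x n⟩
  intro y hy
  simp only [Set.mem_setOf_eq] at hy
  simp only [Set.mem_compl_iff, mem_branches_iff, not_forall]
  refine ⟨n, ?_⟩
  rw [Ext, pfx_length] at hy
  rwa [hy]

/-- Every node of a perfect tree has a branch through it. -/
lemma exists_branch_ext (hp : PerfectTree p) {s : List Bool} (hs : s ∈ p) :
    ∃ x ∈ branches p, Ext s x := by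
  classical
  -- one-step proper extension
  have hnext : ∀ t ∈ p, ∃ t', t <+: t' ∧ t' ∈ p ∧ t.length < t'.length := by
    intro t ht
    obtain ⟨u, hu1, hu2⟩ := hp.2.2 t ht
    exact ⟨u ++ [false], hu1.trans (by exact ⟨[false], rfl⟩), hu2.2.1, by
      have := hu1.length_le; simp; omega⟩
  choose nxt hnxt1 hnxt2 hnxt3 using hnext
  let nx : List Bool → List Bool := fun t => if h : t ∈ p then nxt t h else t ++ [false]
  let g : ℕ → List Bool := fun k => Nat.rec s (fun _ t => nx t) k
  have hg0 : g 0 = s := rfl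
  have hgmem : ∀ k, g k ∈ p := by
    intro k
    induction k with
    | zero => exact hs
    | succ k ih => show nx (g k) ∈ p; simp only [nx, dif_pos ih]; exact hnxt2 _ ih
  have hgstep : ∀ k, g k <+: g (k+1) ∧ (g k).length < (g (k+1)).length := by
    intro k
    show g k <+: nx (g k) ∧ (g k).length < (nx (g k)).length
    have he : nx (g k) = nxt (g k) (hgmem k) := dif_pos (hgmem k)
    rw [he]
    exact ⟨hnxt1 _ (hgmem k), hnxt3 _ (hgmem k)⟩
  have hglen : ∀ k, k ≤ (g k).length := by
    intro k
    induction k with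
    | zero => omega
    | succ k ih => have := (hgstep k).2; omega
  have hgmono : ∀ m k, g m <+: g (m + k) := by
    intro m k
    induction k with
    | zero => exact List.prefix_refl _
    | succ k ih => exact ih.trans (hgstep (m+k)).1
  have hgmono' : ∀ m m', m ≤ m' → g m <+: g m' := by
    intro m m' h
    obtain ⟨k, rfl⟩ := Nat.exists_eq_add_of_le h
    exact hgmono m k
  let x : ℕ → Bool := fun n => (g (n+1))[n]'(hglen (n+1))
  have hxg : ∀ n i, i < n → ∀ h : i < (g n).length, x i = (g n)[i] := by
    intro n i hi h
    have hpre : g (i+1) <+: g n := hgmono' _ _ hi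
    exact hpre.getElem (lt_of_lt_of_le (Nat.lt_succ_self i) (hglen (i+1)))
  have hpfx : ∀ n, pfx x n = (g n).take n := by
    intro n
    have hn := hglen n
    apply List.ext_getElem (by simp; omega)
    intro i h1 h2
    simp only [pfx_getElem]
    rw [List.getElem_take]
    exact hxg n i (by simpa using h1) _
  refine ⟨x, ?_, ?_⟩
  · intro n
    show pfx x n ∈ p
    rw [hpfx n]
    exact hp.2.1 _ (hgmem n) _ (List.take_prefix _ _)
  · show pfx x s.length = s
    rw [hpfx]
    have h1 : s <+: g (s.length) := hg0 ▸ hgmono' 0 _ (Nat.zero_le _)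
    exact (List.prefix_iff_eq_take.mp h1).symm


variable {p : Set (List Bool)}

/-- The basic open box in `[p] × [p]` determined by nodes `s, t`. -/
def BoxSet (p : Set (List Bool)) (s t : List Bool) : Set (↥(branches p) × ↥(branches p)) :=
  {z | Ext s z.1.1 ∧ Ext t z.2.1}

lemma isOpen_boxSet (s t : List Bool) : IsOpen (BoxSet p s t) := by
  have h1 : BoxSet p s t =
      (Subtype.val ⁻¹' {x | Ext s x}) ×ˢ (Subtype.val ⁻¹' {x | Ext t x}) := by
    ext z; rfl
  rw [h1]
  exact ((isOpen_ext s).preimage continuous_subtype_val).prod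
    ((isOpen_ext t).preimage continuous_subtype_val)

lemma boxSet_nonempty (hp : PerfectTree p) {s t : List Bool} (hs : s ∈ p) (ht : t ∈ p) :
    (BoxSet p s t).Nonempty := by
  obtain ⟨x, hx, hxs⟩ := exists_branch_ext hp hs
  obtain ⟨y, hy, hyt⟩ := exists_branch_ext hp ht
  exact ⟨(⟨x, hx⟩, ⟨y, hy⟩), hxs, hyt⟩

lemma boxSet_mono {s s' t t' : List Bool} (hs : s <+: s') (ht : t <+: t') :
    BoxSet p s' t' ⊆ BoxSet p s t :=
  fun _ hz => ⟨ext_mono hs hz.1, ext_mono ht hz.2⟩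

/-- Every open set in a function space contains a cylinder around each of its points. -/
lemma exists_cyl_subset {W : Set (ℕ → Bool)} (hW : IsOpen W) {x : ℕ → Bool} (hx : x ∈ W) :
    ∃ n, ∀ y : ℕ → Bool, (∀ i < n, y i = x i) → y ∈ W := by
  obtain ⟨I, u, hu, hsub⟩ := isOpen_pi_iff.mp hW x hx
  refine ⟨(I.sup id) + 1, fun y hy => hsub ?_⟩
  intro a ha
  rw [hy a (by have := Finset.le_sup (f := id) ha; simpa using Nat.lt_succ_of_le this)]
  exact (hu a ha).2

/-- Open sets in `[p] × [p]` contain a box around each point. -/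
lemma exists_box_subset {W : Set (↥(branches p) × ↥(branches p))} (hW : IsOpen W)
    {z : ↥(branches p) × ↥(branches p)} (hz : z ∈ W) :
    ∃ n, ∀ w : ↥(branches p) × ↥(branches p),
      Ext (pfx z.1.1 n) w.1.1 → Ext (pfx z.2.1 n) w.2.1 → w ∈ W := by
  obtain ⟨O1, O2, hO1, hO2, hz1, hz2, hsub⟩ := isOpen_prod_iff.mp hW z.1 z.2 hz
  obtain ⟨V1, hV1, hV1e⟩ := isOpen_induced_iff.mp hO1
  obtain ⟨V2, hV2, hV2e⟩ := isOpen_induced_iff.mp hO2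
  have hz1' : (z.1 : ℕ → Bool) ∈ V1 := by rw [← hV1e] at hz1; exact hz1
  have hz2' : (z.2 : ℕ → Bool) ∈ V2 := by rw [← hV2e] at hz2; exact hz2
  obtain ⟨n1, hn1⟩ := exists_cyl_subset hV1 hz1'
  obtain ⟨n2, hn2⟩ := exists_cyl_subset hV2 hz2'
  refine ⟨max n1 n2, fun w hw1 hw2 => ?_⟩
  rw [ext_iff_forall] at hw1 hw2
  have hw1' : (w.1 : ℕ → Bool) ∈ V1 := by
    apply hn1
    intro i hi
    have := hw1 i (by simp; omega)
    simpa using this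
  have hw2' : (w.2 : ℕ → Bool) ∈ V2 := by
    apply hn2
    intro i hi
    have := hw2 i (by simp; omega)
    simpa using this
  have : (w.1, w.2) ∈ O1 ×ˢ O2 := by
    constructor
    · show w.1 ∈ O1; rw [← hV1e]; exact hw1'
    · show w.2 ∈ O2; rw [← hV2e]; exact hw2'
  exact hsub this

/-- Key refinement lemma: shrink a box into a point's open neighborhood. -/
lemma refine_box {W : Set (↥(branches p) × ↥(branches p))} (hW : IsOpen W)
    {z : ↥(branches p) × ↥(branches p)} (hz : z ∈ W) {s t : List Bool}
    (hzs : Ext s z.1.1) (hzt : Ext t z.2.1) :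
    ∃ s' t', s <+: s' ∧ t <+: t' ∧ s' ∈ p ∧ t' ∈ p ∧ BoxSet p s' t' ⊆ W := by
  obtain ⟨n, hn⟩ := exists_box_subset hW hz
  set m := max n (max s.length t.length) with hm
  refine ⟨pfx z.1.1 m, pfx z.2.1 m, ?_, ?_, ?_, ?_, ?_⟩
  · exact hzs.prefix_pfx (by omega)
  · exact hzt.prefix_pfx (by omega)
  · exact z.1.2 m
  · exact z.2.2 m
  · intro w hw
    exact hn w (ext_mono (pfx_prefix _ (le_max_left _ _)) hw.1)
      (ext_mono (pfx_prefix _ (le_max_left _ _)) hw.2)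

/-! ### Assignment refinement machinery -/

def Extendsa (E E' : List Bool → List Bool) : Prop := ∀ σ, E σ <+: E' σ

lemma Extendsa.rfl {E : List Bool → List Bool} : Extendsa E E := fun _ => List.prefix_refl _

lemma Extendsa.trans {E E' E'' : List Bool → List Bool} (h : Extendsa E E')
    (h' : Extendsa E' E'') : Extendsa E E'' := fun σ => (h σ).trans (h' σ)

lemma achieve_list (p : Set (List Bool)) (l : List ((List Bool → List Bool) → Prop))
    (h : ∀ Φ ∈ l, (∀ E E', Extendsa E E' → Φ E → Φ E') ∧
         (∀ E, (∀ σ, E σ ∈ p) → ∃ E', Extendsa E E' ∧ (∀ σ, E' σ ∈ p) ∧ Φ E')) :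
    ∀ E, (∀ σ, E σ ∈ p) → ∃ E', Extendsa E E' ∧ (∀ σ, E' σ ∈ p) ∧ ∀ Φ ∈ l, Φ E' := by
  induction l with
  | nil => exact fun E hE => ⟨E, Extendsa.rfl, hE, by simp⟩
  | cons Φ l ih =>
    intro E hE
    obtain ⟨E1, hE1ext, hE1mem, hE1Φ⟩ := (h Φ (by simp)).2 E hE
    obtain ⟨E2, hE2ext, hE2mem, hE2l⟩ := ih (fun Ψ hΨ => h Ψ (by simp [hΨ])) E1 hE1mem
    refine ⟨E2, hE1ext.trans hE2ext, hE2mem, ?_⟩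
    intro Ψ hΨ
    rcases List.mem_cons.mp hΨ with rfl | hΨ
    · exact (h Ψ (by simp)).1 E1 E2 hE2ext hE1Φ
    · exact hE2l Ψ hΨ

/-- Refine an assignment at two distinct coordinates to meet a pairwise target. -/
lemma achieve_pair (a b : List Bool) (hab : a ≠ b) (Tgt : List Bool → List Bool → Prop)
    (hTach : ∀ s t, s ∈ p → t ∈ p →
      ∃ s' t', s <+: s' ∧ t <+: t' ∧ s' ∈ p ∧ t' ∈ p ∧ Tgt s' t') :
    ∀ E : List Bool → List Bool, (∀ σ, E σ ∈ p) →
      ∃ E', Extendsa E E' ∧ (∀ σ, E' σ ∈ p) ∧ Tgt (E' a) (E' b) := by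
  classical
  intro E hE
  obtain ⟨s', t', hs', ht', hs'p, ht'p, hT⟩ := hTach (E a) (E b) (hE a) (hE b)
  refine ⟨Function.update (Function.update E a s') b t', ?_, ?_, ?_⟩
  · intro σ
    simp only [Function.update_apply]
    split_ifs with h1 h2
    · subst h1; exact ht'
    · subst h2; exact hs'
    · exact List.prefix_refl _
  · intro σ
    simp only [Function.update_apply]
    split_ifs with h1 h2
    · exact ht'p
    · exact hs'p
    · exact hE σ
  · simpa [Function.update_apply, hab] using hT

/-- Shrink a box into an open dense set. -/
lemma shrink_open_dense (hp : PerfectTree p) {W : Set (↥(branches p) × ↥(branches p))}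
    (hW : IsOpen W) (hWd : Dense W) {s t : List Bool} (hs : s ∈ p) (ht : t ∈ p) :
    ∃ s' t', s <+: s' ∧ t <+: t' ∧ s' ∈ p ∧ t' ∈ p ∧ BoxSet p s' t' ⊆ W := by
  obtain ⟨z, hzW, hzB⟩ := hWd.exists_mem_open (isOpen_boxSet s t) (boxSet_nonempty hp hs ht)
  exact refine_box hW hzW hzB.1 hzB.2

/-! ### Enumerating binary strings -/

def enum : ℕ → List (List Bool)
  | 0 => [[]]
  | n + 1 => (enum n).flatMap fun σ => [σ ++ [false], σ ++ [true]]

lemma mem_enum_of_length : ∀ {σ : List Bool} {m : ℕ}, σ.length = m → σ ∈ enum m := by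
  intro σ
  induction σ using List.reverseRecOn with
  | nil => rintro m rfl; simp [enum]
  | append_singleton σ i ih =>
    rintro m hm
    simp only [List.length_append, List.length_singleton] at hm
    subst hm
    show _ ∈ enum (σ.length + 1)
    simp only [enum, List.mem_flatMap]
    exact ⟨σ, ih rfl, by cases i <;> simp⟩

/-- Decomposition at the first difference of two distinct strings of equal length. -/
lemma first_diff : ∀ (σ τ : List Bool), σ.length = τ.length → σ ≠ τ →
    ∃ (ρ : List Bool) (i j : Bool) (δ1 δ2 : List Bool),
      i ≠ j ∧ σ = ρ ++ i :: δ1 ∧ τ = ρ ++ j :: δ2 := by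
  intro σ
  induction σ with
  | nil => intro τ h hne; cases τ with
    | nil => exact absurd rfl hne
    | cons b τ => simp at h
  | cons a σ ih =>
    intro τ h hne
    cases τ with
    | nil => simp at h
    | cons b τ =>
      rcases eq_or_ne a b with rfl | hab
      · have hne' : σ ≠ τ := fun hc => hne (by rw [hc])
        obtain ⟨ρ, i, j, δ1, δ2, hij, h1, h2⟩ := ih τ (by simpa using h) hne'
        exact ⟨a :: ρ, i, j, δ1, δ2, hij, by simp [h1], by simp [h2]⟩
      · exact ⟨[], a, b, σ, τ, hab, rfl, rfl⟩

lemma step_exists (hp : PerfectTree p)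
    (g : ℕ → Set (↥(branches p) × ↥(branches p)))
    (hgo : ∀ k, IsOpen (g k)) (hgd : ∀ k, Dense (g k))
    (U V : Set (↥(branches p) × ↥(branches p)))
    (hor : ∀ s t : List Bool, s ∈ p → t ∈ p → ∃ s' t', s <+: s' ∧ t <+: t' ∧ s' ∈ p ∧ t' ∈ p ∧
      (BoxSet p s' t' ⊆ U ∨ BoxSet p s' t' ⊆ V))
    (n : ℕ) (E : List Bool → List Bool) (hE : ∀ σ, E σ ∈ p ∧ Splits p (E σ)) :
    ∃ E' : List Bool → List Bool, (∀ σ, E' σ ∈ p ∧ Splits p (E' σ)) ∧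
      (∀ (σ : List Bool) (i : Bool), E σ ++ [i] <+: E' (σ ++ [i])) ∧
      (∀ a b : List Bool, a.length = n + 1 → b.length = n + 1 → a ≠ b →
        ∀ k ≤ n, BoxSet p (E' a) (E' b) ⊆ g k) ∧
      (∀ σ : List Bool, σ.length = n →
        BoxSet p (E' (σ ++ [false])) (E' (σ ++ [true])) ⊆ U ∨
        BoxSet p (E' (σ ++ [false])) (E' (σ ++ [true])) ⊆ V) := by
  classical
  -- preliminary extension: one new bit
  set E0 : List Bool → List Bool := fun τ => E τ.dropLast ++ [(τ.getLast?).getD false] with hE0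
  have hE0concat : ∀ (σ : List Bool) (i : Bool), E0 (σ ++ [i]) = E σ ++ [i] := by
    intro σ i
    simp [hE0, List.dropLast_concat, List.getLast?_concat]
  have hE0mem : ∀ τ, E0 τ ∈ p := by
    intro τ
    show E τ.dropLast ++ [_] ∈ p
    rcases (hE τ.dropLast).2 with ⟨-, hf, ht⟩
    cases (τ.getLast?).getD false
    · exact hf
    · exact ht
  -- requirement list
  set ΦD : List Bool → List Bool → ℕ → ((List Bool → List Bool) → Prop) :=
    fun a b k => fun E' => a = b ∨ BoxSet p (E' a) (E' b) ⊆ g k with hΦD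
  set ΦC : List Bool → ((List Bool → List Bool) → Prop) :=
    fun σ => fun E' => BoxSet p (E' (σ ++ [false])) (E' (σ ++ [true])) ⊆ U ∨
      BoxSet p (E' (σ ++ [false])) (E' (σ ++ [true])) ⊆ V with hΦC
  set L : List ((List Bool → List Bool) → Prop) :=
    (((enum (n+1)) ×ˢ (enum (n+1))) ×ˢ (List.range (n+1))).map
      (fun q => ΦD q.1.1 q.1.2 q.2) ++ (enum n).map ΦC with hL
  have hLo : ∀ Φ ∈ L, (∀ E1 E2, Extendsa E1 E2 → Φ E1 → Φ E2) ∧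
      (∀ E1, (∀ σ, E1 σ ∈ p) → ∃ E2, Extendsa E1 E2 ∧ (∀ σ, E2 σ ∈ p) ∧ Φ E2) := by
    intro Φ hΦ
    rw [hL, List.mem_append] at hΦ
    rcases hΦ with hΦ | hΦ
    · obtain ⟨q, _, rfl⟩ := List.mem_map.mp hΦ
      obtain ⟨⟨a, b⟩, k⟩ := q
      constructor
      · rintro E1 E2 hext (h | h)
        · exact Or.inl h
        · exact Or.inr fun z hz => h (boxSet_mono (hext a) (hext b) hz)
      · intro E1 hE1
        by_cases hab : a = b
        · exact ⟨E1, Extendsa.rfl, hE1, Or.inl hab⟩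
        · obtain ⟨E2, h1, h2, h3⟩ := achieve_pair a b hab
            (fun s t => BoxSet p s t ⊆ g k)
            (fun s t hs ht => shrink_open_dense hp (hgo k) (hgd k) hs ht) E1 hE1
          exact ⟨E2, h1, h2, Or.inr h3⟩
    · obtain ⟨σ, _, rfl⟩ := List.mem_map.mp hΦ
      constructor
      · rintro E1 E2 hext (h | h)
        · exact Or.inl fun z hz => h (boxSet_mono (hext _) (hext _) hz)
        · exact Or.inr fun z hz => h (boxSet_mono (hext _) (hext _) hz)
      · intro E1 hE1
        exact achieve_pair (σ ++ [false]) (σ ++ [true]) (by simp)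
          (fun s t => BoxSet p s t ⊆ U ∨ BoxSet p s t ⊆ V) hor E1 hE1
  obtain ⟨E1, hE1ext, hE1mem, hE1L⟩ := achieve_list p L hLo E0 hE0mem
  -- final sweep: extend every value to a splitting node
  choose spl hspl1 hspl2 using hp.2.2
  set E2 : List Bool → List Bool :=
    fun σ => if h : E1 σ ∈ p then spl (E1 σ) h else E1 σ with hE2
  have hE2ext : Extendsa E1 E2 := by
    intro σ
    rw [hE2]
    simp only [dif_pos (hE1mem σ)]
    exact hspl1 _ _
  have hE2mem : ∀ σ, E2 σ ∈ p ∧ Splits p (E2 σ) := by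
    intro σ
    have : E2 σ = spl (E1 σ) (hE1mem σ) := by rw [hE2]; simp only [dif_pos (hE1mem σ)]
    rw [this]
    exact ⟨(hspl2 _ _).1, hspl2 _ _⟩
  refine ⟨E2, hE2mem, ?_, ?_, ?_⟩
  · intro σ i
    rw [← hE0concat σ i]
    exact (hE1ext _).trans (hE2ext _)
  · intro a b ha hb hab k hk
    have hmem : ΦD a b k ∈ L := by
      rw [hL, List.mem_append]
      left
      exact List.mem_map.mpr ⟨((a, b), k), by
        rw [List.mem_product, List.mem_product]
        exact ⟨⟨mem_enum_of_length ha, mem_enum_of_length hb⟩,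
          List.mem_range.mpr (by omega)⟩, rfl⟩
    rcases hE1L _ hmem with h | h
    · exact absurd h hab
    · exact fun z hz => h (boxSet_mono (hE2ext a) (hE2ext b) hz)
  · intro σ hσ
    have hmem : ΦC σ ∈ L := by
      rw [hL, List.mem_append]
      right
      exact List.mem_map.mpr ⟨σ, mem_enum_of_length hσ, rfl⟩
    rcases hE1L _ hmem with h | h
    · exact Or.inl fun z hz => h (boxSet_mono (hE2ext _) (hE2ext _) hz)
    · exact Or.inr fun z hz => h (boxSet_mono (hE2ext _) (hE2ext _) hz)

/-! ### Fusion systems -/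

/-- The tree generated by the image of an embedding `ee : 2^{<ω} → 2^{<ω}`. -/
def Qtree (ee : List Bool → List Bool) : Set (List Bool) := {t | ∃ σ, t <+: ee σ}

/-- A monotone system of nodes: the value at `σ ++ [i]` extends the value at `σ`
followed by the bit `i`. -/
def Sys (ee : List Bool → List Bool) : Prop :=
  ∀ (σ : List Bool) (i : Bool), ee σ ++ [i] <+: ee (σ ++ [i])

lemma ext_of_prefix_pfx {s : List Bool} {x : ℕ → Bool} {n : ℕ} (h : s <+: pfx x n) :
    Ext s x := by
  have hlen : s.length ≤ n := by simpa using h.length_le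
  have h1 : s = (pfx x n).take s.length := List.prefix_iff_eq_take.mp h
  rw [Ext, h1, pfx_take x hlen, pfx_length]

namespace Sys

variable {ee : List Bool → List Bool}

lemma mono (h : Sys ee) {σ τ : List Bool} (hστ : σ <+: τ) : ee σ <+: ee τ := by
  obtain ⟨δ, rfl⟩ := hστ
  induction δ using List.reverseRecOn with
  | nil => simp
  | append_singleton δ i ih =>
    calc ee σ <+: ee (σ ++ δ) := ih
    _ <+: ee (σ ++ δ) ++ [i] := List.prefix_append _ _
    _ <+: ee ((σ ++ δ) ++ [i]) := h (σ ++ δ) i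
    _ = ee (σ ++ (δ ++ [i])) := by rw [List.append_assoc]

lemma len (h : Sys ee) (σ : List Bool) : σ.length ≤ (ee σ).length := by
  induction σ using List.reverseRecOn with
  | nil => exact Nat.zero_le _
  | append_singleton σ i ih =>
    have h1 := (h σ i).length_le
    simp only [List.length_append, List.length_singleton] at h1 ⊢
    omega

lemma ext_bit (h : Sys ee) {σ : List Bool} {i : Bool} {x : ℕ → Bool}
    (hx : Ext (ee (σ ++ [i])) x) : x (ee σ).length = i :=
  (ext_append_bit.mp (ext_mono (h σ i) hx)).2

lemma code_unique (h : Sys ee) {σ τ : List Bool} {x : ℕ → Bool}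
    (hlen : σ.length = τ.length) (hx : Ext (ee σ) x) (hy : Ext (ee τ) x) : σ = τ := by
  by_contra hne
  obtain ⟨ρ, i, j, δ1, δ2, hij, rfl, rfl⟩ := first_diff σ τ hlen hne
  have hp1 : (ρ ++ [i]) <+: ρ ++ i :: δ1 := by
    rw [show ρ ++ i :: δ1 = (ρ ++ [i]) ++ δ1 by simp]
    exact List.prefix_append _ _
  have hp2 : (ρ ++ [j]) <+: ρ ++ j :: δ2 := by
    rw [show ρ ++ j :: δ2 = (ρ ++ [j]) ++ δ2 by simp]
    exact List.prefix_append _ _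
  have h1 : Ext (ee (ρ ++ [i])) x := ext_mono (h.mono hp1) hx
  have h2 : Ext (ee (ρ ++ [j])) x := ext_mono (h.mono hp2) hy
  exact hij ((h.ext_bit h1).symm.trans (h.ext_bit h2))

lemma code_prefix (h : Sys ee) {σ τ : List Bool} {x : ℕ → Bool}
    (hlen : σ.length ≤ τ.length) (hx : Ext (ee σ) x) (hy : Ext (ee τ) x) : σ <+: τ := by
  have h1 : Ext (ee (τ.take σ.length)) x :=
    ext_mono (h.mono (List.take_prefix _ _)) hy
  have h2 : σ = τ.take σ.length :=
    h.code_unique (by simp [Nat.min_eq_left hlen]) hx h1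
  rw [h2]
  exact List.take_prefix _ _

lemma exists_code (h : Sys ee) {x : ℕ → Bool} (hx : x ∈ branches (Qtree ee)) (m : ℕ) :
    ∃ σ : List Bool, σ.length = m ∧ Ext (ee σ) x := by
  set N := ((enum m).map fun σ => (ee σ).length).sum + 1 with hN
  have hNlt : ∀ σ : List Bool, σ.length = m → (ee σ).length < N := by
    intro σ hσ
    have hmem : (ee σ).length ∈ (enum m).map fun σ => (ee σ).length :=
      List.mem_map.mpr ⟨σ, mem_enum_of_length hσ, rfl⟩
    have := List.single_le_sum (fun a _ => Nat.zero_le a) _ hmem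
    omega
  obtain ⟨τ, hτ⟩ := hx N
  rcases le_or_gt m τ.length with hm | hm
  · refine ⟨τ.take m, by simp [Nat.min_eq_left hm], ?_⟩
    have h1 : ee (τ.take m) <+: ee τ := h.mono (List.take_prefix _ _)
    have h2 : ee (τ.take m) <+: pfx x N :=
      List.prefix_of_prefix_length_le h1 hτ
        (by rw [pfx_length]; exact le_of_lt (hNlt _ (by simp [Nat.min_eq_left hm])))
    exact ext_of_prefix_pfx h2
  · exfalso
    set τ' := τ ++ List.replicate (m - τ.length) false with hτ'
    have hlen' : τ'.length = m := by simp [hτ']; omega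
    have h1 : ee τ <+: ee τ' := h.mono (List.prefix_append _ _)
    have h2 : N ≤ (ee τ).length := by
      have := hτ.length_le
      simp at this
      omega
    have := h1.length_le
    have := hNlt τ' hlen'
    omega

lemma agree (h : Sys ee) {σ : List Bool} {x y : ℕ → Bool} (hx : Ext (ee σ) x)
    (hy : Ext (ee σ) y) {i : ℕ} (hi : i < σ.length) : x i = y i :=
  ext_agree hx hy (lt_of_lt_of_le hi (h.len σ))

lemma qtree_perfect (h : Sys ee) : PerfectTree (Qtree ee) := by
  refine ⟨⟨ee [], [], List.prefix_refl _⟩, ?_, ?_⟩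
  · rintro s ⟨σ, hσ⟩ t ht
    exact ⟨σ, ht.trans hσ⟩
  · rintro s ⟨σ, hσ⟩
    refine ⟨ee σ, hσ, ⟨σ, List.prefix_refl _⟩, ⟨σ ++ [false], h σ false⟩,
      ⟨σ ++ [true], h σ true⟩⟩

end Sys

end Galvin

open Galvin

/-- **Galvin's theorem for Sacks forcing.**  A coloring of pairs from `[p]` is given as
a symmetric map `c`; Baire measurability of the coloring is expressed as the Baire
property (in the subspace `[p] × [p]`) of the set of pairs colored `1` (equivalently,
preimages of points have the Baire property).  Conclusion: there is a perfect subtree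
`q ⊆ p` with `[q]` homogeneous for `c`. -/
theorem galvin_sacks (p : Set (List Bool)) (hp : PerfectTree p)
    (c : (ℕ → Bool) → (ℕ → Bool) → Bool)
    (hsymm : ∀ x y, c x y = c y x)
    (hBaire : BaireMeasurableSet
      {z : branches p × branches p | c z.1.1 z.2.1 = true}) :
    ∃ q, PerfectTree q ∧ q ⊆ p ∧ ∃ b : Bool,
      ∀ x ∈ branches q, ∀ y ∈ branches q, x ≠ y → c x y = b := by
  classical
  haveI : CompactSpace ↥(branches p) :=
    isCompact_iff_compactSpace.mp (isClosed_branches p).isCompact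
  haveI : LocallyCompactSpace (↥(branches p) × ↥(branches p)) := by infer_instance
  haveI : BaireSpace (↥(branches p) × ↥(branches p)) := by infer_instance
  set A : Set (↥(branches p) × ↥(branches p)) := {z | c z.1.1 z.2.1 = true} with hA
  obtain ⟨U, hUo, hAU⟩ := hBaire.residualEq_isOpen
  obtain ⟨V, hVo, hAV⟩ := BaireMeasurableSet.residualEq_isOpen hBaire.compl
  have hres : {z : ↥(branches p) × ↥(branches p) |
      (z ∈ A ↔ z ∈ U) ∧ (z ∈ Aᶜ ↔ z ∈ V)} ∈ residual _ := by
    filter_upwards [hAU, hAV] with z h1 h2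
    exact ⟨iff_of_eq h1, iff_of_eq h2⟩
  obtain ⟨S, hSo, hSd, hSc, hSsub⟩ := mem_residual_iff.mp hres
  obtain ⟨g, hg⟩ := (hSc.insert Set.univ).exists_eq_range (Set.insert_nonempty _ _)
  have hgmem : ∀ k, g k ∈ insert Set.univ S := fun k => hg ▸ Set.mem_range_self k
  have hgo : ∀ k, IsOpen (g k) := by
    intro k
    rcases Set.mem_insert_iff.mp (hgmem k) with h | h
    · rw [h]; exact isOpen_univ
    · exact hSo _ h
  have hgd : ∀ k, Dense (g k) := by
    intro k
    rcases Set.mem_insert_iff.mp (hgmem k) with h | h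
    · rw [h]; exact dense_univ
    · exact hSd _ h
  have hginter : (⋂ k, g k) ⊆ {z : ↥(branches p) × ↥(branches p) |
      (z ∈ A ↔ z ∈ U) ∧ (z ∈ Aᶜ ↔ z ∈ V)} := by
    intro z hz
    apply hSsub
    intro t ht
    have : t ∈ insert Set.univ S := Set.mem_insert_iff.mpr (Or.inr ht)
    rw [hg] at this
    obtain ⟨k, rfl⟩ := this
    exact Set.mem_iInter.mp hz k
  have hGdense : Dense (⋂ k, g k) :=
    dense_of_mem_residual ((countable_iInter_mem).mpr fun k =>
      residual_of_dense_open (hgo k) (hgd k))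
  -- the decision density property
  have hor : ∀ s t : List Bool, s ∈ p → t ∈ p →
      ∃ s' t', s <+: s' ∧ t <+: t' ∧ s' ∈ p ∧ t' ∈ p ∧
        (BoxSet p s' t' ⊆ U ∨ BoxSet p s' t' ⊆ V) := by
    intro s t hs ht
    obtain ⟨z, hzG, hzB⟩ := hGdense.exists_mem_open (isOpen_boxSet s t)
      (boxSet_nonempty hp hs ht)
    have hzD := hginter hzG
    have hzUV : z ∈ U ∨ z ∈ V := by
      by_cases hzA : z ∈ A
      · exact Or.inl (hzD.1.mp hzA)
      · exact Or.inr (hzD.2.mp hzA)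
    rcases hzUV with hzU | hzV
    · obtain ⟨s', t', h1, h2, h3, h4, h5⟩ := refine_box hUo hzU hzB.1 hzB.2
      exact ⟨s', t', h1, h2, h3, h4, Or.inl h5⟩
    · obtain ⟨s', t', h1, h2, h3, h4, h5⟩ := refine_box hVo hzV hzB.1 hzB.2
      exact ⟨s', t', h1, h2, h3, h4, Or.inr h5⟩
  -- the fusion construction
  choose step hstep1 hstep2 hstep3 hstep4 using
    fun (n : ℕ) (Es : {E : List Bool → List Bool // ∀ σ, E σ ∈ p ∧ Splits p (E σ)}) =>
      step_exists hp g hgo hgd U V hor n Es.1 Es.2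
  obtain ⟨r, hr⟩ := hp.1
  obtain ⟨r', hr'1, hr'2⟩ := hp.2.2 r hr
  have hbase : ∀ σ : List Bool, (fun _ : List Bool => r') σ ∈ p ∧
      Splits p ((fun _ : List Bool => r') σ) := fun _ => ⟨hr'2.1, hr'2⟩
  let F : ℕ → {E : List Bool → List Bool // ∀ σ, E σ ∈ p ∧ Splits p (E σ)} :=
    fun n => Nat.rec ⟨fun _ => r', hbase⟩ (fun n Es => ⟨step n Es, hstep1 n Es⟩) n
  have hFsucc : ∀ n, (F (n+1)).1 = step n (F n) := fun n => rfl
  set e : List Bool → List Bool := fun σ => (F σ.length).1 σ with he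
  have he_mem : ∀ σ, e σ ∈ p ∧ Splits p (e σ) := fun σ => (F σ.length).2 σ
  have he_sys : Sys e := by
    intro σ i
    show e σ ++ [i] <+: (F (σ ++ [i]).length).1 (σ ++ [i])
    rw [show (σ ++ [i]).length = σ.length + 1 by simp, hFsucc]
    exact hstep2 σ.length (F σ.length) σ i
  have he_dens : ∀ a b : List Bool, a.length = b.length → a ≠ b →
      ∀ k < a.length, BoxSet p (e a) (e b) ⊆ g k := by
    intro a b hlen hab k hk
    obtain ⟨n', hn'⟩ : ∃ n', a.length = n' + 1 := ⟨a.length - 1, by omega⟩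
    have hb' : b.length = n' + 1 := by omega
    show BoxSet p ((F a.length).1 a) ((F b.length).1 b) ⊆ g k
    rw [hn', hb', hFsucc]
    exact hstep3 n' (F n') a b hn' hb' hab k (by omega)
  have he_dec : ∀ σ : List Bool,
      BoxSet p (e (σ ++ [false])) (e (σ ++ [true])) ⊆ U ∨
      BoxSet p (e (σ ++ [false])) (e (σ ++ [true])) ⊆ V := by
    intro σ
    have h1 : e (σ ++ [false]) = (F (σ.length + 1)).1 (σ ++ [false]) := by
      rw [he]; simp
    have h2 : e (σ ++ [true]) = (F (σ.length + 1)).1 (σ ++ [true]) := by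
      rw [he]; simp
    rw [h1, h2, hFsucc]
    exact hstep4 _ _ σ rfl
  have he_p : ∀ t : List Bool, t ∈ Qtree e → t ∈ p := by
    rintro t ⟨σ, hσ⟩
    exact hp.2.1 _ (he_mem σ).1 _ hσ
  have he_branches : ∀ x : ℕ → Bool, x ∈ branches (Qtree e) → x ∈ branches p :=
    fun x hx n => he_p _ (hx n)
  -- the core color computation
  set colP : List Bool → Prop :=
    fun ρ => BoxSet p (e (ρ ++ [false])) (e (ρ ++ [true])) ⊆ U with hcolP
  have hcore : ∀ (x y : ℕ → Bool) (hx : x ∈ branches (Qtree e))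
      (hy : y ∈ branches (Qtree e)) (ρ : List Bool),
      Ext (e (ρ ++ [false])) x → Ext (e (ρ ++ [true])) y →
      (c x y = true ↔ colP ρ) := by
    intro x y hx hy ρ hXρ hYρ
    have hxp := he_branches x hx
    have hyp := he_branches y hy
    set z : ↥(branches p) × ↥(branches p) := (⟨x, hxp⟩, ⟨y, hyp⟩) with hz
    have hzB : ∀ a b' : List Bool, Ext (e a) x → Ext (e b') y →
        z ∈ BoxSet p (e a) (e b') := fun a b' ha hb => ⟨ha, hb⟩
    have hzg : ∀ k, z ∈ g k := by
      intro k
      set m := max (ρ.length + 1) (k + 1) with hm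
      obtain ⟨a, ha1, ha2⟩ := he_sys.exists_code hx m
      obtain ⟨b', hb1, hb2⟩ := he_sys.exists_code hy m
      have hρa : ρ ++ [false] <+: a :=
        he_sys.code_prefix (by simp; omega) hXρ ha2
      have hρb : ρ ++ [true] <+: b' :=
        he_sys.code_prefix (by simp; omega) hYρ hb2
      have hab : a ≠ b' := by
        rintro rfl
        have := List.prefix_of_prefix_length_le hρa hρb (by simp)
        have := this.eq_of_length (by simp)
        simp at this
      exact he_dens a b' (by omega) hab k (by omega) (hzB a b' ha2 hb2)
    have hzD := hginter (Set.mem_iInter.mpr hzg)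
    have hzbox := hzB _ _ hXρ hYρ
    have hcA : z ∈ A ↔ c x y = true := Iff.rfl
    constructor
    · intro hc
      by_contra hcol
      rcases he_dec ρ with hU1 | hV1
      · exact hcol hU1
      · have hzV : z ∈ V := hV1 hzbox
        have : z ∈ Aᶜ := hzD.2.mpr hzV
        exact this (hcA.mpr hc)
    · intro hcol
      have hzU : z ∈ U := hcol hzbox
      exact hcA.mp (hzD.1.mpr hzU)
  -- pigeonhole: find a subsystem with constant decision
  obtain ⟨f, b, hf_step, hf_col⟩ : ∃ (f : List Bool → List Bool) (b : Bool),
      (∀ (σ : List Bool) (i : Bool), f σ ++ [i] <+: f (σ ++ [i])) ∧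
      (∀ σ : List Bool, colP (f σ) ↔ b = true) := by
    by_cases hcase : ∃ σ₀ : List Bool, ∀ τ, σ₀ <+: τ → ¬ colP τ
    · obtain ⟨σ₀, hσ₀⟩ := hcase
      refine ⟨fun σ => σ₀ ++ σ, false, ?_, ?_⟩
      · intro σ i
        show σ₀ ++ σ ++ [i] <+: σ₀ ++ (σ ++ [i])
        rw [← List.append_assoc]
      · intro σ
        simp only [Bool.false_eq_true, iff_false]
        exact hσ₀ _ (List.prefix_append _ _)
    · push_neg at hcase
      choose extF hext hcol using hcase
      set go : List Bool → List Bool :=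
        fun ρ => List.rec (extF []) (fun i _ ih => extF (ih ++ [i])) ρ with hgo'
      refine ⟨fun σ => go σ.reverse, true, ?_, ?_⟩
      · intro σ i
        show go σ.reverse ++ [i] <+: go (σ ++ [i]).reverse
        have h1 : (σ ++ [i]).reverse = i :: σ.reverse := by simp
        rw [h1]
        exact hext _
      · intro σ
        simp only [iff_true]
        cases hσr : σ.reverse with
        | nil => exact hcol []
        | cons i ρ => exact hcol _
  set e' : List Bool → List Bool := fun σ => e (f σ) with he'
  have he'_sys : Sys e' := by
    intro σ i
    calc e' σ ++ [i] = e (f σ) ++ [i] := rfl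
    _ <+: e (f σ ++ [i]) := he_sys (f σ) i
    _ <+: e (f (σ ++ [i])) := he_sys.mono (hf_step σ i)
  refine ⟨Qtree e', he'_sys.qtree_perfect, ?_, b, ?_⟩
  · rintro t ⟨σ, hσ⟩
    exact he_p t ⟨f σ, hσ⟩
  · intro x hx y hy hxy
    have hxe : x ∈ branches (Qtree e) := by
      intro n
      obtain ⟨σ, hσ⟩ := hx n
      exact ⟨f σ, hσ⟩
    have hye : y ∈ branches (Qtree e) := by
      intro n
      obtain ⟨σ, hσ⟩ := hy n
      exact ⟨f σ, hσ⟩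
    choose cx hcx1 hcx2 using he'_sys.exists_code hx
    choose cy hcy1 hcy2 using he'_sys.exists_code hy
    have hne : ∃ m, cx m ≠ cy m := by
      by_contra hall
      push_neg at hall
      apply hxy
      funext n
      have h1 := hcx2 (n + 1)
      have h2 := hcy2 (n + 1)
      rw [← hall (n + 1)] at h2
      exact he'_sys.agree h1 h2 (by rw [hcx1]; omega)
    set m := Nat.find hne with hmdef
    have hm : cx m ≠ cy m := Nat.find_spec hne
    have hmin : ∀ k < m, cx k = cy k := by
      intro k hk
      rw [hmdef] at hk
      exact not_not.mp (Nat.find_min hne hk)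
    have hm0 : m ≠ 0 := by
      intro h0
      apply hm
      rw [h0]
      rw [List.length_eq_zero_iff.mp (hcx1 0), List.length_eq_zero_iff.mp (hcy1 0)]
    set n := m - 1 with hn
    have hmn : m = n + 1 := by omega
    have hρeq : cx n = cy n := hmin n (by omega)
    have hpre_x : cx n <+: cx m :=
      he'_sys.code_prefix (by rw [hcx1, hcx1]; omega) (hcx2 n) (hcx2 m)
    have hpre_y : cy n <+: cy m :=
      he'_sys.code_prefix (by rw [hcy1, hcy1]; omega) (hcy2 n) (hcy2 m)
    obtain ⟨u, hu⟩ := hpre_x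
    obtain ⟨v, hv⟩ := hpre_y
    have hulen : u.length = 1 := by
      have h1 := hcx1 m
      have h2 := hcx1 n
      rw [← hu] at h1
      simp at h1
      omega
    have hvlen : v.length = 1 := by
      have h1 := hcy1 m
      have h2 := hcy1 n
      rw [← hv] at h1
      simp at h1
      omega
    obtain ⟨i, rfl⟩ := List.length_eq_one_iff.mp hulen
    obtain ⟨j, rfl⟩ := List.length_eq_one_iff.mp hvlen
    have hij : i ≠ j := by
      rintro rfl
      apply hm
      rw [← hu, ← hv, hρeq]
    have hXm : Ext (e' (cx n ++ [i])) x := by rw [hu]; exact hcx2 m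
    have hYm : Ext (e' (cx n ++ [j])) y := by rw [← hρeq] at hv; rw [hv]; exact hcy2 m
    have hX : Ext (e (f (cx n) ++ [i])) x :=
      ext_mono (he_sys.mono (hf_step (cx n) i)) hXm
    have hY : Ext (e (f (cx n) ++ [j])) y :=
      ext_mono (he_sys.mono (hf_step (cx n) j)) hYm
    cases i
    · -- i = false, j = true
      have hj : j = true := by cases j with | false => exact absurd rfl hij | true => rfl
      rw [hj] at hY
      have hiff := hcore x y hxe hye (f (cx n)) hX hY
      rw [hf_col (cx n)] at hiff
      cases b
      · cases hc : c x y with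
        | false => rfl
        | true => exact absurd (hiff.mp hc) (by simp)
      · exact hiff.mpr rfl
    · -- i = true, j = false
      have hj : j = false := by cases j with | false => rfl | true => exact absurd rfl hij
      rw [hj] at hY
      have hiff := hcore y x hye hxe (f (cx n)) hY hX
      rw [hf_col (cx n)] at hiff
      rw [hsymm]
      cases b
      · cases hc : c y x with
        | false => rfl
        | true => exact absurd (hiff.mp hc) (by simp)
      · exact hiff.mpr rfl
end
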